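/- arXiv:0812.1135 — 9 statements merged into one kernel-verified Lean document; each statement's English description precedes it below -/
import Mathlib

section
/- For every j ∈ {0,1,…,p} one has the matrix identity Ã G_j = G'_j Ã in M(pn,ℂ). -/
open Matrix

/-- The block matrix `G_j ∈ M(pn,ℂ)`: its `j`-th block row is
`(A_1, …, A_{j-1}, A_j + λI, A_{j+1}, …, A_p)` and all other block rows vanish. -/
noncomputable def Gmat (n p : ℕ) (A : Fin p → Matrix (Fin n) (Fin n) ℂ) (lam : ℂ)
    (j : Fin p) : Matrix (Fin p × Fin n) (Fin p × Fin n) ℂ :=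
  fun x y => if x.1 = j then
    (A y.1 + if y.1 = j then lam • (1 : Matrix (Fin n) (Fin n) ℂ) else 0) x.2 y.2
  else 0

/-- The block matrix `G'_j ∈ M(pn,ℂ)`: its `j`-th block row is
`(A_j, …, A_j, A_j + λI, A_j, …, A_j)` (with `A_j + λI` in block column `j`)
and all other block rows vanish. -/
noncomputable def Gmat' (n p : ℕ) (A : Fin p → Matrix (Fin n) (Fin n) ℂ) (lam : ℂ)
    (j : Fin p) : Matrix (Fin p × Fin n) (Fin p × Fin n) ℂ :=
  fun x y => if x.1 = j then
    (A j + if y.1 = j then lam • (1 : Matrix (Fin n) (Fin n) ℂ) else 0) x.2 y.2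
  else 0

/-- The block-diagonal matrix `Ã = diag(A_1,…,A_p) ∈ M(pn,ℂ)`. -/
noncomputable def Atil (n p : ℕ) (A : Fin p → Matrix (Fin n) (Fin n) ℂ) :
    Matrix (Fin p × Fin n) (Fin p × Fin n) ℂ :=
  fun x y => if x.1 = y.1 then A x.1 x.2 y.2 else 0

/-- `Ã G_j = G'_j Ã` for `j = 1,…,p`, and also for `j = 0` where
`G_0 := −(G_1+⋯+G_p)` and `G'_0 := −(G'_1+⋯+G'_p)`. -/
theorem stmt_2 (n p : ℕ) (A : Fin p → Matrix (Fin n) (Fin n) ℂ) (lam : ℂ) :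
    (∀ j : Fin p, Atil n p A * Gmat n p A lam j = Gmat' n p A lam j * Atil n p A) ∧
    Atil n p A * (-(∑ j, Gmat n p A lam j)) = (-(∑ j, Gmat' n p A lam j)) * Atil n p A := by
  have h : ∀ j : Fin p, Atil n p A * Gmat n p A lam j = Gmat' n p A lam j * Atil n p A := by
    intro j
    ext ⟨x1, x2⟩ ⟨y1, y2⟩
    simp only [Matrix.mul_apply, Gmat, Gmat', Atil, Fintype.sum_prod_type, ite_mul, mul_ite,
      zero_mul, mul_zero, Finset.sum_ite_eq, Finset.sum_ite_eq', Finset.mem_univ, if_true,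
      Finset.sum_ite_irrel, Finset.sum_const_zero]
    by_cases hx : x1 = j
    · subst hx
      by_cases hy : y1 = x1 <;>
        simp [hy, Matrix.add_apply, Matrix.smul_apply, Matrix.one_apply, mul_add, add_mul,
          Finset.sum_add_distrib, Finset.mul_sum, Finset.sum_mul, mul_ite, ite_mul,
          mul_zero, zero_mul, Finset.sum_ite_eq, Finset.sum_ite_eq', mul_comm]
    · simp [hx]
  refine ⟨h, ?_⟩
  simp only [Matrix.mul_neg, Matrix.neg_mul, Matrix.mul_sum, Matrix.sum_mul, h]
end

section
/- For every j ∈ {0,1,…,p} the subspace Im Ã of ℂ^{pn} is invariant under G'_j, i.e. G'_j(Im Ã) ⊆ Im Ã; moreover ker G'_0 = ⋂_{j=1}^p ker G'_j. -/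
open Matrix
lemma gmul (n p : ℕ) (A : Fin p → Matrix (Fin n) (Fin n) ℂ) (lam : ℂ)
    (j : Fin p) (u : Fin p × Fin n → ℂ) (x : Fin p × Fin n) :
    (Gmat' n p A lam j).mulVec u x =
      if x.1 = j then (∑ y : Fin p × Fin n, A j x.2 y.2 * u y) + lam * u (j, x.2) else 0 := by
  simp only [Gmat', mulVec, dotProduct]
  split
  · next h =>
    simp only [Matrix.add_apply, Matrix.smul_apply, Matrix.one_apply, add_mul,
      Finset.sum_add_distrib]
    congr 1
    rw [Fintype.sum_prod_type, Finset.sum_eq_single j]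
    · simp [Matrix.smul_apply, Matrix.one_apply, ite_mul, mul_comm]
    · intro b _ hb; simp [hb]
    · simp
  · simp

/-- For `j = 0,1,…,p` the subspace `Im Ã ⊆ ℂ^{pn}` is invariant under
`G'_j`, and `ker G'_0 = ⋂_{j=1}^p ker G'_j`, where `G'_0 := −(G'_1+⋯+G'_p)`. -/
theorem stmt_3 (n p : ℕ) (A : Fin p → Matrix (Fin n) (Fin n) ℂ) (lam : ℂ) :
    (∀ j : Fin p,
      Submodule.map (Gmat' n p A lam j).mulVecLin
          (LinearMap.range (Atil n p A).mulVecLin) ≤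
        LinearMap.range (Atil n p A).mulVecLin) ∧
    (Submodule.map (-(∑ j, Gmat' n p A lam j)).mulVecLin
        (LinearMap.range (Atil n p A).mulVecLin) ≤
      LinearMap.range (Atil n p A).mulVecLin) ∧
    LinearMap.ker (-(∑ j, Gmat' n p A lam j)).mulVecLin =
      ⨅ j : Fin p, LinearMap.ker (Gmat' n p A lam j).mulVecLin := by
  have amul : ∀ (v : Fin p × Fin n → ℂ) (x : Fin p × Fin n),
      (Atil n p A).mulVec v x = ∑ t, A x.1 x.2 t * v (x.1, t) := by
    intro v x
    simp only [Atil, mulVec, dotProduct, Fintype.sum_prod_type]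
    rw [Finset.sum_eq_single x.1]
    · simp
    · intro b _ hb; simp [Ne.symm hb]
    · simp
  have h1 : ∀ j : Fin p,
      Submodule.map (Gmat' n p A lam j).mulVecLin
          (LinearMap.range (Atil n p A).mulVecLin) ≤
        LinearMap.range (Atil n p A).mulVecLin := by
    intro j y hy
    obtain ⟨_, ⟨v, rfl⟩, rfl⟩ := hy
    refine ⟨fun x => if x.1 = j then
      (∑ k : Fin p, (Atil n p A).mulVec v (k, x.2)) + lam * v (j, x.2) else 0, ?_⟩
    simp only [mulVecLin_apply]
    funext x
    rw [amul, gmul]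
    split
    · next h =>
      subst h
      simp only [if_pos rfl]
      rw [Fintype.sum_prod_type_right]
      simp only [mul_add, Finset.sum_add_distrib, Finset.mul_sum]
      congr 1
      · rw [amul, Finset.mul_sum]
        exact Finset.sum_congr rfl fun t _ => by ring
    · next h => simp [h]
  have hsum : ∀ (u : Fin p × Fin n → ℂ) (x : Fin p × Fin n),
      (∑ i, Gmat' n p A lam i).mulVec u x = ∑ i, (Gmat' n p A lam i).mulVec u x := by
    intro u x
    simp only [mulVec, dotProduct, Matrix.sum_apply, Finset.sum_apply, Finset.sum_mul]
    rw [Finset.sum_comm]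
  refine ⟨h1, ?_, ?_⟩
  · intro y hy
    obtain ⟨_, ⟨v, rfl⟩, rfl⟩ := hy
    have : (-(∑ j, Gmat' n p A lam j)).mulVecLin ((Atil n p A).mulVecLin v)
        = -∑ j, (Gmat' n p A lam j).mulVecLin ((Atil n p A).mulVecLin v) := by
      simp only [mulVecLin_apply, neg_mulVec]
      congr 1
      funext x
      rw [hsum]
      simp [Finset.sum_apply]
    rw [this]
    refine neg_mem (Submodule.sum_mem _ fun j _ => ?_)
    exact h1 j ⟨_, ⟨v, rfl⟩, rfl⟩
  · ext u
    simp only [LinearMap.mem_ker, Submodule.mem_iInf, mulVecLin_apply, neg_mulVec,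
      neg_eq_zero]
    have key : ∀ x : Fin p × Fin n, (∑ i, Gmat' n p A lam i).mulVec u x
        = (Gmat' n p A lam x.1).mulVec u x := by
      intro x
      rw [hsum, Finset.sum_eq_single x.1]
      · intro b _ hb; rw [gmul, if_neg (Ne.symm hb)]
      · simp
    constructor
    · intro h j
      funext x
      rw [gmul]
      split
      · next hx =>
        have := congrFun h (j, x.2)
        rw [key] at this
        simpa [gmul, hx] using this
      · rfl
    · intro h
      funext x
      rw [key, h x.1]
end

section
/- Assume λ ≠ 0. Then Ã(K + L_λ) = ker G'_0, and ker G'_0 ⊆ Im Ã. -/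
open Matrix

lemma ite_app {α : Type*} [Zero α] {m k : Type*} (c : Prop) [Decidable c]
    (M : Matrix m k α) (i : m) (l : k) :
    (if c then M else 0) i l = if c then M i l else 0 := by
  split <;> simp

lemma atil_apply (n p : ℕ) (A : Fin p → Matrix (Fin n) (Fin n) ℂ)
    (u : Fin p × Fin n → ℂ) (j : Fin p) (i : Fin n) :
    (Atil n p A).mulVec u (j, i) = ∑ l, A j i l * u (j, l) := by
  simp [Matrix.mulVec, dotProduct, Atil, Fintype.sum_prod_type, ite_mul]

lemma gsum_apply (n p : ℕ) (A : Fin p → Matrix (Fin n) (Fin n) ℂ) (lam : ℂ)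
    (u : Fin p × Fin n → ℂ) (j : Fin p) (i : Fin n) :
    (∑ m, Gmat n p A lam m).mulVec u (j, i)
      = (∑ k, ∑ l, A k i l * u (k, l)) + lam * u (j, i) := by
  simp [Matrix.mulVec, dotProduct, Gmat, Fintype.sum_prod_type, Matrix.sum_apply,
    Matrix.add_apply, Matrix.smul_apply, Matrix.one_apply, ite_mul, mul_ite, ite_app,
    add_mul, Finset.sum_add_distrib, Finset.mul_sum]

lemma g'sum_apply (n p : ℕ) (A : Fin p → Matrix (Fin n) (Fin n) ℂ) (lam : ℂ)
    (u : Fin p × Fin n → ℂ) (j : Fin p) (i : Fin n) :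
    (∑ m, Gmat' n p A lam m).mulVec u (j, i)
      = (∑ k, ∑ l, A j i l * u (k, l)) + lam * u (j, i) := by
  simp [Matrix.mulVec, dotProduct, Gmat', Fintype.sum_prod_type, Matrix.sum_apply,
    Matrix.add_apply, Matrix.smul_apply, Matrix.one_apply, ite_mul, mul_ite, ite_app,
    add_mul, Finset.sum_add_distrib, Finset.mul_sum]

/-- membership in ker G'₀ as pointwise equations -/
lemma mem_kerG' (n p : ℕ) (A : Fin p → Matrix (Fin n) (Fin n) ℂ) (lam : ℂ)
    (v : Fin p × Fin n → ℂ) :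
    v ∈ LinearMap.ker (-(∑ j, Gmat' n p A lam j)).mulVecLin ↔
      ∀ j i, (∑ k, ∑ l, A j i l * v (k, l)) + lam * v (j, i) = 0 := by
  rw [LinearMap.mem_ker, Matrix.mulVecLin_apply, Matrix.neg_mulVec, neg_eq_zero]
  constructor
  · intro h j i
    have := congrFun h (j, i)
    rwa [g'sum_apply] at this
  · intro h
    funext x
    obtain ⟨j, i⟩ := x
    rw [g'sum_apply]
    exact h j i

lemma mem_kerG (n p : ℕ) (A : Fin p → Matrix (Fin n) (Fin n) ℂ) (lam : ℂ)
    (v : Fin p × Fin n → ℂ) :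
    v ∈ LinearMap.ker (∑ j, Gmat n p A lam j).mulVecLin ↔
      ∀ j i, (∑ k, ∑ l, A k i l * v (k, l)) + lam * v (j, i) = 0 := by
  rw [LinearMap.mem_ker, Matrix.mulVecLin_apply]
  constructor
  · intro h j i
    have := congrFun h (j, i)
    rwa [gsum_apply] at this
  · intro h
    funext x
    obtain ⟨j, i⟩ := x
    rw [gsum_apply]
    exact h j i


/-- If `λ ≠ 0` then `Ã(K + L_λ) = ker G'_0 ⊆ Im Ã`, where
`K = ker Ã`, `L_λ = ker(G_1+⋯+G_p)` and `G'_0 = −(G'_1+⋯+G'_p)`. -/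
theorem stmt_4 (n p : ℕ) (A : Fin p → Matrix (Fin n) (Fin n) ℂ) (lam : ℂ)
    (hlam : lam ≠ 0) :
    Submodule.map (Atil n p A).mulVecLin
        (LinearMap.ker (Atil n p A).mulVecLin ⊔
          LinearMap.ker (∑ j, Gmat n p A lam j).mulVecLin) =
      LinearMap.ker (-(∑ j, Gmat' n p A lam j)).mulVecLin ∧
    LinearMap.ker (-(∑ j, Gmat' n p A lam j)).mulVecLin ≤
      LinearMap.range (Atil n p A).mulVecLin := by
  have main : Submodule.map (Atil n p A).mulVecLin
        (LinearMap.ker (Atil n p A).mulVecLin ⊔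
          LinearMap.ker (∑ j, Gmat n p A lam j).mulVecLin) =
      LinearMap.ker (-(∑ j, Gmat' n p A lam j)).mulVecLin := by
    apply le_antisymm
    · rintro v ⟨w, hw, rfl⟩
      rw [SetLike.mem_coe, Submodule.mem_sup] at hw
      obtain ⟨a, ha, b, hb, rfl⟩ := hw
      rw [LinearMap.mem_ker] at ha
      have hab : (Atil n p A).mulVecLin (a + b) = (Atil n p A).mulVecLin b := by
        rw [map_add, ha, zero_add]
      rw [hab]
      rw [mem_kerG] at hb
      rw [mem_kerG']
      -- the column sums
      set S : Fin n → ℂ := fun i => ∑ k, ∑ l, A k i l * b (k, l) with hS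
      have hbS : ∀ j i, b (j, i) = -(lam⁻¹ * S i) := by
        intro j i
        have h := hb j i
        field_simp
        linear_combination h
      have key : ∀ i, (∑ k, ∑ l, A k i l * S l) = -(lam * S i) := by
        intro i
        have h1 : S i = ∑ k, ∑ l, A k i l * (-(lam⁻¹ * S l)) := by
          rw [hS]
          exact Finset.sum_congr rfl fun k _ => Finset.sum_congr rfl fun l _ => by
            rw [hbS k l]
        have h2 : (∑ k, ∑ l, A k i l * (-(lam⁻¹ * S l)))
            = -(lam⁻¹) * ∑ k, ∑ l, A k i l * S l := by
          rw [Finset.mul_sum]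
          refine Finset.sum_congr rfl fun k _ => ?_
          rw [Finset.mul_sum]
          exact Finset.sum_congr rfl fun l _ => by ring
        rw [h2] at h1
        field_simp at h1
        linear_combination h1
      intro j i
      simp only [Matrix.mulVecLin_apply]
      have hAbapp : ∀ k l, (Atil n p A).mulVec b (k, l) = -(lam⁻¹) * ∑ m, A k l m * S m := by
        intro k l
        rw [atil_apply, Finset.mul_sum]
        exact Finset.sum_congr rfl fun m _ => by rw [hbS k m]; ring
      have hColSum : ∀ l, (∑ k, (Atil n p A).mulVec b (k, l)) = S l := by
        intro l
        have : (∑ k, (Atil n p A).mulVec b (k, l))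
            = -(lam⁻¹) * ∑ k, ∑ m, A k l m * S m := by
          rw [Finset.mul_sum]
          exact Finset.sum_congr rfl fun k _ => hAbapp k l
        rw [this, key l]
        field_simp
      have h3 : (∑ k, ∑ l, A j i l * (Atil n p A).mulVec b (k, l))
          = ∑ l, A j i l * S l := by
        rw [Finset.sum_comm]
        refine Finset.sum_congr rfl fun l _ => ?_
        rw [← Finset.mul_sum, hColSum l]
      rw [h3, hAbapp j i]
      have h4 : (∑ m, A j i m * S m) = ∑ l, A j i l * S l := rfl
      field_simp
      ring
    · intro v hv
      rw [mem_kerG'] at hv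
      set s : Fin n → ℂ := fun l => ∑ k, v (k, l) with hs
      have hv' : ∀ j i, (∑ l, A j i l * s l) = -(lam * v (j, i)) := by
        intro j i
        have h := hv j i
        rw [Finset.sum_comm] at h
        have h2 : (∑ l, ∑ k, A j i l * v (k, l)) = ∑ l, A j i l * s l := by
          refine Finset.sum_congr rfl fun l _ => ?_
          rw [hs, ← Finset.mul_sum]
        rw [h2] at h
        linear_combination h
      set b : Fin p × Fin n → ℂ := fun x => -(lam⁻¹ * s x.2) with hbdef
      have hAb : (Atil n p A).mulVecLin b = v := by
        funext x
        obtain ⟨j, i⟩ := x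
        rw [Matrix.mulVecLin_apply, atil_apply]
        have h5 : (∑ l, A j i l * b (j, l)) = -(lam⁻¹) * ∑ l, A j i l * s l := by
          rw [Finset.mul_sum]
          refine Finset.sum_congr rfl fun l _ => ?_
          simp only [hbdef]
          ring
        rw [h5, hv' j i]
        field_simp
      refine ⟨b, Submodule.mem_sup_right ?_, hAb⟩
      rw [mem_kerG]
      intro j i
      have hrow : ∀ k, (∑ l, A k i l * b (k, l)) = -(lam⁻¹) * ∑ l, A k i l * s l := by
        intro k
        rw [Finset.mul_sum]
        refine Finset.sum_congr rfl fun l _ => ?_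
        simp only [hbdef]
        ring
      have h6 : (∑ k, ∑ l, A k i l * b (k, l)) = ∑ k, v (k, i) := by
        refine Finset.sum_congr rfl fun k _ => ?_
        rw [hrow k, hv' k i]
        field_simp
      rw [h6]
      have hb2 : lam * b (j, i) = -(s i) := by
        simp only [hbdef]
        field_simp
      rw [hb2]
      show (∑ k, v (k, i)) + -(∑ k, v (k, i)) = 0
      ring
  refine ⟨main, ?_⟩
  rw [← main]
  rintro v ⟨w, _, rfl⟩
  exact ⟨w, rfl⟩
end

section
/- Assume λ ≠ 0. Then the subspace K + L_λ is invariant under each G_j (j = 1,…,p), the subspaces Im Ã and ker G'_0 ⊆ Im Ã are invariant under each G'_j (j = 1,…,p), and the linear map induced by Ã is a well-defined linear isomorphism φ from the quotient space ℂ^{pn}/(K + L_λ) onto the quotient space (Im Ã)/(ker G'_0) satisfying φ ∘ Ḡ_j = Ḡ'_j ∘ φ for every j = 1,…,p, where Ḡ_j and Ḡ'_j denote the endomorphisms induced by G_j and G'_j on the respective quotients. In particular, the middle convolution mc_λ(A_1,…,A_p) = (Ḡ_1,…,Ḡ_p) is equivalent to the tuple (Ḡ'_1,…,Ḡ'_p).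 -/
open Matrix

section aux
variable {n p : ℕ} (A : Fin p → Matrix (Fin n) (Fin n) ℂ) (lam : ℂ)

lemma atil_mv (v : Fin p × Fin n → ℂ) (x : Fin p × Fin n) :
    (Atil n p A).mulVec v x = ∑ b, A x.1 x.2 b * v (x.1, b) := by
  simp [Atil, Matrix.mulVec, dotProduct, Fintype.sum_prod_type]

lemma ite_mat_apply (j k : Fin p) (a b : Fin n) :
    (if k = j then lam • (1 : Matrix (Fin n) (Fin n) ℂ) else 0) a b =
      if k = j then lam * (if a = b then 1 else 0) else 0 := by
  split <;> simp [Matrix.one_apply]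

lemma gmat_mv (j : Fin p) (v : Fin p × Fin n → ℂ) (x : Fin p × Fin n) :
    (Gmat n p A lam j).mulVec v x =
      if x.1 = j then (∑ k, ∑ b, A k x.2 b * v (k, b)) + lam * v (j, x.2) else 0 := by
  by_cases h : x.1 = j <;>
    simp [Gmat, Matrix.mulVec, dotProduct, Fintype.sum_prod_type, h,
      ite_mat_apply, add_mul, Finset.sum_add_distrib, ite_mul, mul_ite,
      Finset.sum_ite_eq, Finset.sum_ite_eq']

lemma gmat'_mv (j : Fin p) (v : Fin p × Fin n → ℂ) (x : Fin p × Fin n) :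
    (Gmat' n p A lam j).mulVec v x =
      if x.1 = j then (∑ b, A j x.2 b * ∑ k, v (k, b)) + lam * v (j, x.2) else 0 := by
  by_cases h : x.1 = j
  · simp only [Gmat', Matrix.mulVec, dotProduct, Fintype.sum_prod_type, h,
      if_pos, ite_mat_apply, Matrix.add_apply, add_mul, Finset.sum_add_distrib,
      ite_mul, mul_ite, zero_mul, Finset.sum_ite_eq, Finset.sum_ite_eq',
      Finset.mem_univ, if_true, mul_one]
    rw [Finset.sum_comm]
    simp [Finset.mul_sum]
  · simp [Gmat', Matrix.mulVec, dotProduct, h]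


lemma sum_mulVec' {m : Type*} [Fintype m] [DecidableEq m] (M : Fin p → Matrix m m ℂ)
    (v : m → ℂ) : (∑ k, M k).mulVec v = ∑ k, (M k).mulVec v := by
  funext x
  simp only [Matrix.mulVec, dotProduct, Finset.sum_apply, Matrix.sum_apply,
    Finset.sum_mul]
  rw [Finset.sum_comm]

lemma sumG_mv (v : Fin p × Fin n → ℂ) (x : Fin p × Fin n) :
    (∑ k, Gmat n p A lam k).mulVec v x =
      (∑ k, ∑ b, A k x.2 b * v (k, b)) + lam * v x := by
  rw [sum_mulVec']
  simp only [Finset.sum_apply, gmat_mv]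
  rw [Finset.sum_ite_eq Finset.univ x.1]
  simp

lemma sumG'_mv (v : Fin p × Fin n → ℂ) (x : Fin p × Fin n) :
    (∑ k, Gmat' n p A lam k).mulVec v x =
      (∑ b, A x.1 x.2 b * ∑ k, v (k, b)) + lam * v x := by
  rw [sum_mulVec']
  simp only [Finset.sum_apply, gmat'_mv]
  rw [Finset.sum_ite_eq Finset.univ x.1]
  simp

/-- Intertwining: `Ã (G_j x) = G'_j (Ã x)`. -/
lemma key1 (j : Fin p) (v : Fin p × Fin n → ℂ) :
    (Atil n p A).mulVec ((Gmat n p A lam j).mulVec v) =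
      (Gmat' n p A lam j).mulVec ((Atil n p A).mulVec v) := by
  funext x
  rw [atil_mv, gmat'_mv]
  simp only [gmat_mv, atil_mv]
  by_cases h : x.1 = j
  · simp only [h, if_pos]
    simp [mul_add, Finset.sum_add_distrib, Finset.mul_sum, mul_comm, mul_left_comm]
  · simp [h]

/-- `G'_0 (Ã v) = - Ã (G v)` where `G = ∑ G_k`, `G'_0 = -(∑ G'_k)`. -/
lemma key2 (v : Fin p × Fin n → ℂ) :
    (-(∑ k, Gmat' n p A lam k)).mulVec ((Atil n p A).mulVec v) =
      -((Atil n p A).mulVec ((∑ k, Gmat n p A lam k).mulVec v)) := by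
  funext x
  rw [Matrix.neg_mulVec]
  simp only [Pi.neg_apply, neg_inj]
  rw [sumG'_mv, atil_mv]
  simp only [sumG_mv, atil_mv]
  simp [mul_add, Finset.sum_add_distrib, Finset.mul_sum, mul_comm, mul_left_comm]

/-- If `G'_0 y = 0` then `G'_j y = 0`. -/
lemma key3 (j : Fin p) (y : Fin p × Fin n → ℂ)
    (hy : (-(∑ k, Gmat' n p A lam k)).mulVec y = 0) :
    (Gmat' n p A lam j).mulVec y = 0 := by
  funext x
  rw [gmat'_mv]
  by_cases h : x.1 = j
  · have := congrFun hy (j, x.2)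
    rw [Matrix.neg_mulVec] at this
    simp only [Pi.neg_apply, Pi.zero_apply, neg_eq_zero] at this
    rw [sumG'_mv] at this
    simpa [h] using this
  · simp [h]

/-- `ker G'_0 ≤ Im Ã` (for `lam ≠ 0`). -/
lemma key4 (hlam : lam ≠ 0) (y : Fin p × Fin n → ℂ)
    (hy : (-(∑ k, Gmat' n p A lam k)).mulVec y = 0) :
    ∃ u, (Atil n p A).mulVec u = y := by
  refine ⟨fun z => -(lam⁻¹ * ∑ k, y (k, z.2)), ?_⟩
  funext x
  rw [atil_mv]
  have h0 := congrFun hy x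
  rw [Matrix.neg_mulVec] at h0
  simp only [Pi.neg_apply, Pi.zero_apply, neg_eq_zero] at h0
  rw [sumG'_mv] at h0
  have hs : ∑ b, A x.1 x.2 b * ∑ k, y (k, b) = -(lam * y x) := by
    linear_combination h0
  calc ∑ b, A x.1 x.2 b * -(lam⁻¹ * ∑ k, y (k, b))
      = -(lam⁻¹ * ∑ b, A x.1 x.2 b * ∑ k, y (k, b)) := by
        rw [Finset.mul_sum]; simp [mul_comm, mul_left_comm]
    _ = y x := by rw [hs]; field_simp
  
/-- If `Ã w = 0` then `G w = lam • w`. -/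
lemma key5 (w : Fin p × Fin n → ℂ) (hw : (Atil n p A).mulVec w = 0) :
    (∑ k, Gmat n p A lam k).mulVec w = lam • w := by
  funext x
  rw [sumG_mv]
  have : ∀ k : Fin p, ∑ b, A k x.2 b * w (k, b) = 0 := fun k => by
    simpa [atil_mv] using congrFun hw (k, x.2)
  simp [this]

end aux


/-- For `λ ≠ 0`: the subspace `K + L_λ` is invariant under each `G_j`,
`Im Ã` and `ker G'_0 ⊆ Im Ã` are invariant under each `G'_j`, and the map induced by `Ã`
is a well-defined linear isomorphism `φ : ℂ^{pn}/(K + L_λ) ≃ (Im Ã)/(ker G'_0)` with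
`φ ∘ Ḡ_j = Ḡ'_j ∘ φ` for all `j`; i.e. `mc_λ(A) = (Ḡ_1,…,Ḡ_p)` is equivalent to
`(Ḡ'_1,…,Ḡ'_p)`. -/
theorem stmt_5 (n p : ℕ) (A : Fin p → Matrix (Fin n) (Fin n) ℂ) (lam : ℂ)
    (hlam : lam ≠ 0) :
    ∃ (hG : ∀ j : Fin p,
        LinearMap.ker (Atil n p A).mulVecLin ⊔
            LinearMap.ker (∑ k, Gmat n p A lam k).mulVecLin ≤
          Submodule.comap (Gmat n p A lam j).mulVecLin
            (LinearMap.ker (Atil n p A).mulVecLin ⊔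
              LinearMap.ker (∑ k, Gmat n p A lam k).mulVecLin))
      (hW : ∀ (j : Fin p) (x : Fin p × Fin n → ℂ),
        x ∈ LinearMap.range (Atil n p A).mulVecLin →
          (Gmat' n p A lam j).mulVecLin x ∈ LinearMap.range (Atil n p A).mulVecLin)
      (hN : ∀ j : Fin p,
        Submodule.comap (LinearMap.range (Atil n p A).mulVecLin).subtype
            (LinearMap.ker (-(∑ k, Gmat' n p A lam k)).mulVecLin) ≤
          Submodule.comap ((Gmat' n p A lam j).mulVecLin.restrict (hW j))
            (Submodule.comap (LinearMap.range (Atil n p A).mulVecLin).subtype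
              (LinearMap.ker (-(∑ k, Gmat' n p A lam k)).mulVecLin))),
      (LinearMap.ker (-(∑ k, Gmat' n p A lam k)).mulVecLin ≤
        LinearMap.range (Atil n p A).mulVecLin) ∧
      ∃ φ : ((Fin p × Fin n → ℂ) ⧸
              (LinearMap.ker (Atil n p A).mulVecLin ⊔
                LinearMap.ker (∑ k, Gmat n p A lam k).mulVecLin)) ≃ₗ[ℂ]
            (LinearMap.range (Atil n p A).mulVecLin ⧸
              Submodule.comap (LinearMap.range (Atil n p A).mulVecLin).subtype
                (LinearMap.ker (-(∑ k, Gmat' n p A lam k)).mulVecLin)),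
        (∀ x : Fin p × Fin n → ℂ,
          φ (Submodule.Quotient.mk x) =
            Submodule.Quotient.mk ⟨(Atil n p A).mulVecLin x,
              LinearMap.mem_range_self _ x⟩) ∧
        ∀ j : Fin p,
          φ.toLinearMap ∘ₗ Submodule.mapQ _ _ (Gmat n p A lam j).mulVecLin (hG j) =
            Submodule.mapQ _ _ ((Gmat' n p A lam j).mulVecLin.restrict (hW j)) (hN j) ∘ₗ
              φ.toLinearMap := by
  classical
  set TL := (Atil n p A).mulVecLin with hTL
  set GsL := (∑ k, Gmat n p A lam k).mulVecLin with hGsL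
  set G0L := (-(∑ k, Gmat' n p A lam k)).mulVecLin with hG0L
  set KL := LinearMap.ker TL ⊔ LinearMap.ker GsL with hKL
  set N := Submodule.comap (LinearMap.range TL).subtype (LinearMap.ker G0L) with hN0
  -- characterization of K ⊔ L
  have hmem : ∀ x, x ∈ KL ↔ G0L (TL x) = 0 := by
    intro x
    constructor
    · intro hx
      rw [hKL, Submodule.mem_sup] at hx
      obtain ⟨y, hy, z, hz, rfl⟩ := hx
      rw [LinearMap.mem_ker] at hy hz
      have : TL (y + z) = TL z := by rw [map_add, hy, zero_add]
      rw [this, hTL, hG0L, Matrix.mulVecLin_apply, Matrix.mulVecLin_apply, key2]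
      have hz' : (∑ k, Gmat n p A lam k).mulVec z = 0 := by
        rw [← Matrix.mulVecLin_apply]; exact hz
      rw [hz']
      simp
    · intro hx
      have hAG : (Atil n p A).mulVec ((∑ k, Gmat n p A lam k).mulVec x) = 0 := by
        have := key2 A lam x
        rw [hG0L, Matrix.mulVecLin_apply, hTL, Matrix.mulVecLin_apply] at hx
        rw [hx] at this
        simpa using this.symm
      set w := (∑ k, Gmat n p A lam k).mulVec x with hw
      rw [hKL, Submodule.mem_sup]
      refine ⟨lam⁻¹ • w, ?_, x - lam⁻¹ • w, ?_, by ring⟩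
      · rw [LinearMap.mem_ker, hTL, Matrix.mulVecLin_apply, Matrix.mulVec_smul, hAG,
          smul_zero]
      · rw [LinearMap.mem_ker, hGsL, Matrix.mulVecLin_apply, Matrix.mulVec_sub,
          Matrix.mulVec_smul, ← hw, key5 A lam w hAG, smul_smul, inv_mul_cancel₀ hlam,
          one_smul, sub_self]
  -- invariance of K ⊔ L under G_j
  have hG : ∀ j : Fin p, KL ≤ Submodule.comap (Gmat n p A lam j).mulVecLin KL := by
    intro j x hx
    rw [Submodule.mem_comap, hmem]
    rw [hmem] at hx
    have h1 : TL ((Gmat n p A lam j).mulVecLin x) = (Gmat' n p A lam j).mulVec (TL x) := by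
      rw [hTL, Matrix.mulVecLin_apply, Matrix.mulVecLin_apply, key1, Matrix.mulVecLin_apply]
    have h2 : (Gmat' n p A lam j).mulVec (TL x) = 0 := by
      apply key3
      rw [hG0L, Matrix.mulVecLin_apply] at hx
      exact hx
    rw [h1, h2, map_zero]
  -- invariance of range Ã under G'_j
  have hW : ∀ (j : Fin p) (x : Fin p × Fin n → ℂ),
      x ∈ LinearMap.range TL → (Gmat' n p A lam j).mulVecLin x ∈ LinearMap.range TL := by
    rintro j x ⟨u, rfl⟩
    refine ⟨(Gmat n p A lam j).mulVec u, ?_⟩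
    rw [hTL, Matrix.mulVecLin_apply, Matrix.mulVecLin_apply, Matrix.mulVecLin_apply, key1]
  -- invariance of ker G'_0 under (restricted) G'_j
  have hN : ∀ j : Fin p,
      N ≤ Submodule.comap ((Gmat' n p A lam j).mulVecLin.restrict (hW j)) N := by
    intro j x hx
    rw [hN0, Submodule.mem_comap, LinearMap.mem_ker] at hx
    rw [Submodule.mem_comap, hN0, Submodule.mem_comap, LinearMap.mem_ker]
    have h2 : (Gmat' n p A lam j).mulVec (x : Fin p × Fin n → ℂ) = 0 := by
      apply key3
      rw [hG0L, Matrix.mulVecLin_apply] at hx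
      exact hx
    have h3 : ((Gmat' n p A lam j).mulVecLin.restrict (hW j) x : Fin p × Fin n → ℂ)
        = 0 := by
      rw [LinearMap.restrict_apply]
      simpa [Matrix.mulVecLin_apply] using h2
    rw [Submodule.coe_subtype, h3, map_zero]
  -- ker G'_0 ≤ range Ã
  have hfirst : LinearMap.ker G0L ≤ LinearMap.range TL := by
    intro y hy
    rw [LinearMap.mem_ker, hG0L, Matrix.mulVecLin_apply] at hy
    obtain ⟨u, hu⟩ := key4 A lam hlam y hy
    exact ⟨u, by rw [hTL, Matrix.mulVecLin_apply, hu]⟩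
  -- the map ψ and the quotient equivalence
  set ψ : (Fin p × Fin n → ℂ) →ₗ[ℂ] (LinearMap.range TL ⧸ N) :=
    N.mkQ ∘ₗ TL.rangeRestrict with hψ
  have hψ_apply : ∀ x, ψ x = Submodule.Quotient.mk ⟨TL x, LinearMap.mem_range_self _ x⟩ :=
    fun x => rfl
  have hψker : ∀ x, ψ x = 0 ↔ G0L (TL x) = 0 := by
    intro x
    rw [hψ_apply, Submodule.Quotient.mk_eq_zero, hN0, Submodule.mem_comap,
      LinearMap.mem_ker]
    rfl
  have hle : KL ≤ LinearMap.ker ψ := by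
    intro x hx
    rw [LinearMap.mem_ker, hψker]
    exact (hmem x).1 hx
  set φ₀ := KL.liftQ ψ hle with hφ₀
  have hinj : Function.Injective φ₀ := by
    rw [← LinearMap.ker_eq_bot]
    rw [Submodule.ker_liftQ_eq_bot]
    intro x hx
    rw [LinearMap.mem_ker, hψker] at hx
    exact (hmem x).2 hx
  have hsurj : Function.Surjective φ₀ := by
    intro q
    obtain ⟨w, rfl⟩ := N.mkQ_surjective q
    obtain ⟨u, hu⟩ := w.2
    refine ⟨Submodule.Quotient.mk u, ?_⟩
    rw [hφ₀, Submodule.liftQ_apply, hψ_apply]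
    congr 1
    exact Subtype.ext hu
  refine ⟨hG, hW, hN, hfirst, LinearEquiv.ofBijective φ₀ ⟨hinj, hsurj⟩, ?_, ?_⟩
  · intro x
    exact hψ_apply x
  · intro j
    apply Submodule.linearMap_qext
    refine LinearMap.ext fun x => ?_
    simp only [LinearMap.comp_apply, Submodule.mkQ_apply, Submodule.mapQ_apply,
      LinearEquiv.coe_coe]
    have hφmk : ∀ y, (LinearEquiv.ofBijective φ₀ ⟨hinj, hsurj⟩) (Submodule.Quotient.mk y)
        = ψ y := fun y => rfl
    rw [hφmk, hφmk, hψ_apply, hψ_apply, Submodule.mapQ_apply]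
    congr 1
    refine Subtype.ext ?_
    rw [LinearMap.restrict_apply]
    show TL ((Gmat n p A lam j).mulVecLin x) = (Gmat' n p A lam j).mulVecLin (TL x)
    rw [hTL, Matrix.mulVecLin_apply, Matrix.mulVecLin_apply, Matrix.mulVecLin_apply,
      Matrix.mulVecLin_apply, key1]
end

section
/- Let A ∈ M(n,ℂ) and set A_j := E_j A for j = 1,…,p. Then the following two pairs of conditions are equivalent: (I) for every i ∈ {1,…,p} and every τ ∈ ℂ, (⋂_{ν≠i} ker A_ν) ∩ ker(A_i + τI_n) = {0} and (∑_{ν≠i} Im A_ν) + Im(A_i + τI_n) = ℂ^n; (II) rank A = n, and for every i ∈ {1,…,p} and every τ ∈ ℂ, rank((A + τI_n)E_i) = n_i and rank(E_i(A + τI_n)) = n_i. -/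
open Matrix

/-- For the partition `n = n_1 + ⋯ + n_p`, realized by the index type
`Σ i, Fin (n_i)`, the diagonal idempotent `E_i` which is the identity on the rows of the
`i`-th block and zero elsewhere. -/
noncomputable def Eproj (p : ℕ) (nn : Fin p → ℕ) (i : Fin p) :
    Matrix ((j : Fin p) × Fin (nn j)) ((j : Fin p) × Fin (nn j)) ℂ :=
  fun x y => if x = y ∧ x.1 = i then 1 else 0

namespace Stmt7

variable {p : ℕ} {nn : Fin p → ℕ}

lemma Eproj_mulVec (i : Fin p) (y : ((j : Fin p) × Fin (nn j)) → ℂ) :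
    Eproj p nn i *ᵥ y = fun a => if a.1 = i then y a else 0 := by
  funext a
  simp only [Eproj, mulVec, dotProduct]
  rw [Finset.sum_eq_single a]
  · by_cases h : a.1 = i <;> simp [h]
  · intro b _ hb
    simp [Ne.symm hb]
  · simp

lemma sum_Eproj_mulVec (y : ((j : Fin p) × Fin (nn j)) → ℂ) :
    ∑ ν : Fin p, Eproj p nn ν *ᵥ y = y := by
  funext a
  simp only [Finset.sum_apply, Eproj_mulVec]
  rw [Finset.sum_ite_eq]
  simp

lemma Eproj_mulVec_idem (i : Fin p) (y : ((j : Fin p) × Fin (nn j)) → ℂ) :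
    Eproj p nn i *ᵥ (Eproj p nn i *ᵥ y) = Eproj p nn i *ᵥ y := by
  funext a
  simp only [Eproj_mulVec]
  by_cases h : a.1 = i <;> simp [h]

lemma Eproj_mulVec_ne {ν i : Fin p} (h : ν ≠ i) (y : ((j : Fin p) × Fin (nn j)) → ℂ) :
    Eproj p nn ν *ᵥ (Eproj p nn i *ᵥ y) = 0 := by
  funext a
  simp only [Eproj_mulVec, Pi.zero_apply]
  by_cases h1 : a.1 = ν
  · rw [if_pos h1, if_neg]
    intro h2
    exact h (h1.symm.trans h2)
  · rw [if_neg h1]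

lemma Eproj_transpose (i : Fin p) : (Eproj p nn i)ᵀ = Eproj p nn i := by
  funext a b
  rcases eq_or_ne a b with h | h
  · subst h; rfl
  · simp [Eproj, transpose_apply, h, Ne.symm h]

lemma rank_eq_card_iff {m k : Type*} [Fintype m] [Fintype k] (M : Matrix m k ℂ) :
    M.rank = Fintype.card k ↔ ∀ x, M *ᵥ x = 0 → x = 0 := by
  have h := LinearMap.finrank_range_add_finrank_ker M.mulVecLin
  rw [Module.finrank_pi] at h
  have hbot : (∀ x, M *ᵥ x = 0 → x = 0) ↔ LinearMap.ker M.mulVecLin = ⊥ := by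
    rw [Submodule.eq_bot_iff]
    simp only [LinearMap.mem_ker, mulVecLin_apply]
  rw [hbot, Matrix.rank]
  constructor
  · intro hr
    exact Submodule.finrank_eq_zero.mp (by omega)
  · intro hk
    rw [hk, finrank_bot] at h
    omega

lemma rank_eq_card_iff_range {m k : Type*} [Fintype m] [Fintype k] (M : Matrix m k ℂ) :
    M.rank = Fintype.card m ↔ LinearMap.range M.mulVecLin = ⊤ := by
  rw [Matrix.rank]
  constructor
  · intro h
    apply Submodule.eq_top_of_finrank_eq
    rw [h, Module.finrank_pi]
  · intro h
    rw [h, finrank_top, Module.finrank_pi]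

lemma iSup_range_eq_top_iff {m k : Type*} [Fintype m] [Fintype k] [DecidableEq m] [DecidableEq k]
    (M : k → Matrix m m ℂ) :
    (⨆ j, LinearMap.range (M j).mulVecLin) = ⊤ ↔ ∀ u, (∀ j, (M j)ᵀ *ᵥ u = 0) → u = 0 := by
  set N : Matrix m (k × m) ℂ := fun a b => M b.1 a b.2 with hN
  have hrange : LinearMap.range N.mulVecLin = ⨆ j, LinearMap.range (M j).mulVecLin := by
    apply le_antisymm
    · rintro _ ⟨x, rfl⟩
      have hx : N.mulVecLin x = ∑ j, (M j) *ᵥ (fun b => x (j, b)) := by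
        funext a
        simp only [mulVecLin_apply, mulVec, dotProduct, Finset.sum_apply]
        simp only [hN]
        rw [Fintype.sum_prod_type]
      rw [hx]
      exact Submodule.sum_mem _ fun j _ => Submodule.mem_iSup_of_mem j ⟨_, rfl⟩
    · apply iSup_le
      rintro j _ ⟨y, rfl⟩
      refine ⟨fun b => if b.1 = j then y b.2 else 0, ?_⟩
      funext a
      simp only [mulVecLin_apply, mulVec, dotProduct]
      simp only [hN]
      rw [Fintype.sum_prod_type, Finset.sum_eq_single j]
      · simp
      · intro b _ hb
        simp [hb]
      · simp
  have hNT : ∀ u : m → ℂ, (Nᵀ *ᵥ u = 0) ↔ ∀ j, (M j)ᵀ *ᵥ u = 0 := by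
    intro u
    constructor
    · intro h j
      funext b
      have := congrFun h (j, b)
      simp only [mulVec, dotProduct, transpose_apply] at this ⊢
      simpa [hN] using this
    · intro h
      funext jb
      have := congrFun (h jb.1) jb.2
      simp only [mulVec, dotProduct, transpose_apply] at this ⊢
      simpa [hN] using this
  rw [← hrange, ← rank_eq_card_iff_range, ← N.rank_transpose, rank_eq_card_iff]
  constructor
  · intro h u hu
    exact h u ((hNT u).mpr hu)
  · intro h u hu
    exact h u ((hNT u).mp hu)

noncomputable def Lmap (p : ℕ) (nn : Fin p → ℕ) (i : Fin p) :
    (Fin (nn i) → ℂ) →ₗ[ℂ] (((j : Fin p) × Fin (nn j)) → ℂ) where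
  toFun z a := if h : a.1 = i then z (h ▸ a.2) else 0
  map_add' z w := by
    funext a
    by_cases h : a.1 = i <;> simp [h]
  map_smul' c z := by
    funext a
    by_cases h : a.1 = i <;> simp [h]

lemma Lmap_apply_mk (i : Fin p) (z : Fin (nn i) → ℂ) (c : Fin (nn i)) :
    Lmap p nn i z ⟨i, c⟩ = z c := by
  simp [Lmap]

lemma Lmap_eq (i : Fin p) (x : ((j : Fin p) × Fin (nn j)) → ℂ) :
    Lmap p nn i (fun c => x ⟨i, c⟩) = Eproj p nn i *ᵥ x := by
  funext a
  rw [Eproj_mulVec]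
  rcases a with ⟨j, b⟩
  by_cases h : j = i
  · subst h
    simp [Lmap]
  · simp [Lmap, h]

lemma Eproj_mulVec_Lmap (i : Fin p) (z : Fin (nn i) → ℂ) :
    Eproj p nn i *ᵥ (Lmap p nn i z) = Lmap p nn i z := by
  rw [Eproj_mulVec]
  funext a
  by_cases h : a.1 = i
  · simp [h]
  · simp [h, Lmap]

lemma rank_mul_Eproj_iff (i : Fin p)
    (M : Matrix ((j : Fin p) × Fin (nn j)) ((j : Fin p) × Fin (nn j)) ℂ) :
    (M * Eproj p nn i).rank = nn i ↔
      ∀ x, M *ᵥ (Eproj p nn i *ᵥ x) = 0 → Eproj p nn i *ᵥ x = 0 := by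
  have hrange : LinearMap.range (M * Eproj p nn i).mulVecLin
      = LinearMap.range (M.mulVecLin ∘ₗ Lmap p nn i) := by
    apply le_antisymm
    · rintro _ ⟨x, rfl⟩
      refine ⟨fun c => x ⟨i, c⟩, ?_⟩
      simp only [LinearMap.comp_apply, mulVecLin_apply]
      rw [Lmap_eq, mulVec_mulVec]
    · rintro _ ⟨z, rfl⟩
      refine ⟨Lmap p nn i z, ?_⟩
      simp only [LinearMap.comp_apply, mulVecLin_apply]
      rw [← mulVec_mulVec, Eproj_mulVec_Lmap]
  have hrn := LinearMap.finrank_range_add_finrank_ker (M.mulVecLin ∘ₗ Lmap p nn i)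
  rw [Module.finrank_pi, Fintype.card_fin] at hrn
  have hiff : (M * Eproj p nn i).rank = nn i ↔
      LinearMap.ker (M.mulVecLin ∘ₗ Lmap p nn i) = ⊥ := by
    rw [Matrix.rank, hrange]
    constructor
    · intro h
      exact Submodule.finrank_eq_zero.mp (by omega)
    · intro h
      rw [h, finrank_bot] at hrn
      omega
  rw [hiff, Submodule.eq_bot_iff]
  simp only [LinearMap.mem_ker, LinearMap.comp_apply, mulVecLin_apply]
  constructor
  · intro h x hx
    have h0 := h (fun c => x ⟨i, c⟩) (by rw [Lmap_eq]; exact hx)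
    rw [← Lmap_eq, h0, map_zero]
  · intro h z hz
    have h1 : Eproj p nn i *ᵥ (Lmap p nn i z) = 0 :=
      h (Lmap p nn i z) (by rw [Eproj_mulVec_Lmap]; exact hz)
    rw [Eproj_mulVec_Lmap] at h1
    funext c
    have := congrFun h1 ⟨i, c⟩
    simpa [Lmap_apply_mk] using this

end Stmt7

/-- For `A ∈ M(n,ℂ)` and `A_j := E_j A`, the pair of conditions
(`(*)`/`(**)`) holds for all `i` and `τ ∈ ℂ` iff `rank A = n` and
`rank((A+τ)E_i) = rank(E_i(A+τ)) = n_i` for all `i` and `τ`. -/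
theorem stmt_7 (p : ℕ) (nn : Fin p → ℕ) (hpos : ∀ i, 0 < nn i)
    (A : Matrix ((j : Fin p) × Fin (nn j)) ((j : Fin p) × Fin (nn j)) ℂ) :
    (∀ (i : Fin p) (τ : ℂ),
      ((⨅ (ν : Fin p) (_ : ν ≠ i), LinearMap.ker (Eproj p nn ν * A).mulVecLin) ⊓
          LinearMap.ker (Eproj p nn i * A + τ • 1).mulVecLin = ⊥) ∧
      ((⨆ (ν : Fin p) (_ : ν ≠ i), LinearMap.range (Eproj p nn ν * A).mulVecLin) ⊔
          LinearMap.range (Eproj p nn i * A + τ • 1).mulVecLin = ⊤))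
    ↔ (A.rank = ∑ i, nn i ∧
      ∀ (i : Fin p) (τ : ℂ),
        ((A + τ • 1) * Eproj p nn i).rank = nn i ∧
        (Eproj p nn i * (A + τ • 1)).rank = nn i) := by
  classical
  set E := Eproj p nn with hE
  have hcard : Fintype.card ((j : Fin p) × Fin (nn j)) = ∑ i, nn i := by
    simp [Fintype.card_sigma]
  have hQ0 : (A.rank = ∑ i, nn i) ↔ ∀ x, A *ᵥ x = 0 → x = 0 := by
    rw [← hcard]
    exact Stmt7.rank_eq_card_iff A
  have hQ1 : ∀ (i : Fin p) (τ : ℂ), (((A + τ • 1) * E i).rank = nn i ↔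
      ∀ x, (A + τ • 1) *ᵥ (E i *ᵥ x) = 0 → E i *ᵥ x = 0) :=
    fun i τ => Stmt7.rank_mul_Eproj_iff i _
  have hQ2 : ∀ (i : Fin p) (τ : ℂ), ((E i * (A + τ • 1)).rank = nn i ↔
      ∀ x, (Aᵀ + τ • 1) *ᵥ (E i *ᵥ x) = 0 → E i *ᵥ x = 0) := by
    intro i τ
    rw [← Matrix.rank_transpose, Matrix.transpose_mul, hE, Stmt7.Eproj_transpose,
      Matrix.transpose_add, Matrix.transpose_smul, Matrix.transpose_one]
    exact Stmt7.rank_mul_Eproj_iff i _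
  have hP1 : ∀ (i : Fin p) (τ : ℂ),
      ((⨅ (ν : Fin p) (_ : ν ≠ i), LinearMap.ker (E ν * A).mulVecLin) ⊓
        LinearMap.ker (E i * A + τ • 1).mulVecLin = ⊥) ↔
      (∀ x, (∀ ν, ν ≠ i → E ν *ᵥ (A *ᵥ x) = 0) → E i *ᵥ (A *ᵥ x) + τ • x = 0 → x = 0) := by
    intro i τ
    rw [Submodule.eq_bot_iff]
    simp only [Submodule.mem_inf, Submodule.mem_iInf, LinearMap.mem_ker, mulVecLin_apply,
      Matrix.add_mulVec, Matrix.smul_mulVec, Matrix.one_mulVec, ← Matrix.mulVec_mulVec,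
      and_imp]
  have hP2 : ∀ (i : Fin p) (τ : ℂ),
      ((⨆ (ν : Fin p) (_ : ν ≠ i), LinearMap.range (E ν * A).mulVecLin) ⊔
        LinearMap.range (E i * A + τ • 1).mulVecLin = ⊤) ↔
      (∀ u, (∀ ν, ν ≠ i → Aᵀ *ᵥ (E ν *ᵥ u) = 0) → Aᵀ *ᵥ (E i *ᵥ u) + τ • u = 0 → u = 0) := by
    intro i τ
    set G : Fin p → Matrix ((j : Fin p) × Fin (nn j)) ((j : Fin p) × Fin (nn j)) ℂ :=
      fun ν => if ν = i then E i * A + τ • 1 else E ν * A with hG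
    have hsplit : (⨆ (ν : Fin p) (_ : ν ≠ i), LinearMap.range (E ν * A).mulVecLin) ⊔
        LinearMap.range (E i * A + τ • 1).mulVecLin
        = ⨆ ν, LinearMap.range (G ν).mulVecLin := by
      apply le_antisymm
      · apply sup_le
        · refine iSup₂_le fun ν hν => ?_
          calc LinearMap.range (E ν * A).mulVecLin
              = LinearMap.range (G ν).mulVecLin := by rw [hG]; simp [if_neg hν]
            _ ≤ ⨆ ν, LinearMap.range (G ν).mulVecLin :=
              le_iSup (fun ν => LinearMap.range (G ν).mulVecLin) ν
        · calc LinearMap.range (E i * A + τ • 1).mulVecLin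
              = LinearMap.range (G i).mulVecLin := by rw [hG]; simp
            _ ≤ ⨆ ν, LinearMap.range (G ν).mulVecLin :=
              le_iSup (fun ν => LinearMap.range (G ν).mulVecLin) i
      · apply iSup_le
        intro ν
        by_cases hν : ν = i
        · subst hν
          rw [hG]
          simp only [if_pos rfl]
          exact le_sup_right
        · rw [hG]
          simp only [if_neg hν]
          exact le_sup_of_le_left (le_iSup₂ (f := fun ν (_ : ν ≠ i) =>
            LinearMap.range (E ν * A).mulVecLin) ν hν)
    rw [hsplit, Stmt7.iSup_range_eq_top_iff]
    constructor
    · intro h u h1 h2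
      apply h u
      intro ν
      by_cases hν : ν = i
      · subst hν
        rw [hG]
        simp only [if_pos rfl, if_true, eq_self_iff_true, Matrix.transpose_add,
          Matrix.transpose_mul, hE, Stmt7.Eproj_transpose, Matrix.transpose_smul,
          Matrix.transpose_one]
        rw [Matrix.add_mulVec, Matrix.smul_mulVec, Matrix.one_mulVec, ← Matrix.mulVec_mulVec]
        exact h2
      · rw [hG]
        simp only [if_neg hν, Matrix.transpose_mul, hE, Stmt7.Eproj_transpose]
        rw [← Matrix.mulVec_mulVec]
        exact h1 ν hν
    · intro h u hu
      apply h u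
      · intro ν hν
        have := hu ν
        rw [hG] at this
        simp only [if_neg hν, Matrix.transpose_mul, hE, Stmt7.Eproj_transpose] at this
        rw [← Matrix.mulVec_mulVec] at this
        exact this
      · have := hu i
        rw [hG] at this
        simp only [if_pos rfl, if_true, eq_self_iff_true, Matrix.transpose_add,
          Matrix.transpose_mul, hE, Stmt7.Eproj_transpose, Matrix.transpose_smul,
          Matrix.transpose_one] at this
        rw [Matrix.add_mulVec, Matrix.smul_mulVec, Matrix.one_mulVec,
          ← Matrix.mulVec_mulVec] at this
        exact this
  constructor
  · intro H
    have hQ0' : ∀ x, A *ᵥ x = 0 → x = 0 := by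
      rcases isEmpty_or_nonempty (Fin p) with hemp | hne
      · intro x _
        funext a
        exact (hemp.false a.1).elim
      · obtain ⟨i0⟩ := hne
        intro x hx
        refine (hP1 i0 0).mp (H i0 0).1 x (fun ν _ => by rw [hx, Matrix.mulVec_zero]) ?_
        rw [hx, Matrix.mulVec_zero, zero_smul, add_zero]
    refine ⟨hQ0.mpr hQ0', fun i τ => ⟨(hQ1 i τ).mpr ?_, (hQ2 i τ).mpr ?_⟩⟩
    · intro x hx
      set y := E i *ᵥ x with hy
      have hAy : A *ᵥ y = -(τ • y) := by
        rw [Matrix.add_mulVec, Matrix.smul_mulVec, Matrix.one_mulVec] at hx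
        exact eq_neg_of_add_eq_zero_left hx
      exact (hP1 i τ).mp (H i τ).1 y
        (fun ν hν => by
          rw [hAy, Matrix.mulVec_neg, Matrix.mulVec_smul, hy, hE, Stmt7.Eproj_mulVec_ne hν,
            smul_zero, neg_zero])
        (by
          rw [hAy, Matrix.mulVec_neg, Matrix.mulVec_smul, hy, hE, Stmt7.Eproj_mulVec_idem,
            ← hE, ← hy, neg_add_cancel])
    · intro x hx
      set w := E i *ᵥ x with hw
      have hAw : Aᵀ *ᵥ w = -(τ • w) := by
        rw [Matrix.add_mulVec, Matrix.smul_mulVec, Matrix.one_mulVec] at hx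
        exact eq_neg_of_add_eq_zero_left hx
      exact (hP2 i τ).mp (H i τ).2 w
        (fun ν hν => by
          rw [hw, hE, Stmt7.Eproj_mulVec_ne hν, Matrix.mulVec_zero])
        (by
          rw [hw, hE, Stmt7.Eproj_mulVec_idem, ← hE, ← hw, hAw, neg_add_cancel])
  · rintro ⟨hr, hiτ⟩ i τ
    have hQ0' := hQ0.mp hr
    have hQ0T : ∀ x, Aᵀ *ᵥ x = 0 → x = 0 := by
      have hT : Aᵀ.rank = Fintype.card ((j : Fin p) × Fin (nn j)) := by
        rw [Matrix.rank_transpose, hcard]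
        exact hr
      exact (Stmt7.rank_eq_card_iff Aᵀ).mp hT
    constructor
    · apply (hP1 i τ).mpr
      intro x h1 h2
      have hAx : A *ᵥ x = E i *ᵥ (A *ᵥ x) := by
        conv_lhs => rw [← Stmt7.sum_Eproj_mulVec (A *ᵥ x)]
        rw [Finset.sum_eq_single i]
        · intro ν _ hν
          exact h1 ν hν
        · simp
      have hAx2 : A *ᵥ x = -(τ • x) := by
        rw [hAx]
        exact eq_neg_of_add_eq_zero_left h2
      rcases eq_or_ne τ 0 with h0 | h0
      · apply hQ0' x
        rw [hAx2, h0, zero_smul, neg_zero]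
      · have hEx : E i *ᵥ x = x := by
          have h3 : τ • x = -(E i *ᵥ (A *ᵥ x)) := by
            rw [← hAx, hAx2, neg_neg]
          have h4 : E i *ᵥ (τ • x) = τ • x := by
            conv_lhs => rw [h3]
            rw [Matrix.mulVec_neg, hE, Stmt7.Eproj_mulVec_idem]
            exact h3.symm
          rw [Matrix.mulVec_smul] at h4
          exact smul_right_injective _ h0 h4
        have hQ1' := (hQ1 i τ).mp (hiτ i τ).1
        have h5 : E i *ᵥ x = 0 := hQ1' x (by
          rw [hEx, Matrix.add_mulVec, Matrix.smul_mulVec, Matrix.one_mulVec, hAx2,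
            neg_add_cancel])
        rw [hEx] at h5
        exact h5
    · apply (hP2 i τ).mpr
      intro u h1 h2
      have hdecomp : u - E i *ᵥ u = ∑ ν ∈ Finset.univ.erase i, E ν *ᵥ u := by
        have h := Stmt7.sum_Eproj_mulVec (p := p) (nn := nn) u
        rw [← Finset.add_sum_erase _ _ (Finset.mem_univ i)] at h
        exact (eq_sub_of_add_eq' h).symm
      have hker : Aᵀ *ᵥ (u - E i *ᵥ u) = 0 := by
        rw [hdecomp, ← mulVecLin_apply, map_sum]
        refine Finset.sum_eq_zero fun ν hν => ?_
        rw [mulVecLin_apply]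
        exact h1 ν (Finset.ne_of_mem_erase hν)
      have hu : u = E i *ᵥ u := sub_eq_zero.mp (hQ0T _ hker)
      have hQ2' := (hQ2 i τ).mp (hiτ i τ).2
      have h3 : E i *ᵥ u = 0 := hQ2' u (by
        rw [Matrix.add_mulVec, Matrix.smul_mulVec, Matrix.one_mulVec]
        rw [hu] at h2
        rw [hE, Stmt7.Eproj_mulVec_idem] at h2
        exact h2)
      rw [hu]
      exact h3
end

section
/- Let A ∈ M(n,ℂ) satisfy the Okubo conditions and let ρ_1, ρ_2 ∈ ℂ with ρ_1ρ_2 ≠ 0. Then: (i) Â V̂ ⊆ V̂ and Ê_i V̂ ⊆ V̂ for every i = 1,…,p+1; (ii) the restriction of Â to V̂ is injective, so that dim(Â V̂) = dim V̂ = n + rank B; and (iii) for every τ ∈ ℂ and every i = 1,…,p+1, dim((Â + τI_{2n})Ê_i V̂) = n_i and dim(Ê_i(Â + τI_{2n}) V̂) = n_i, where n_{p+1} := rank B. In other words, the extended matrix Â restricted to V̂ again satisfies the Okubo conditions with respect to the extended partition (n_1,…,n_p,n_{p+1}). -/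
set_option linter.unusedSectionVars false
set_option linter.unusedVariables false
set_option maxHeartbeats 1000000

open Matrix

/-- The extended matrix `Â = [[A, I],[−B, (ρ_1+ρ_2)I − A]] ∈ M(2n,ℂ)`, where
`B := (A−ρ_1I)(A−ρ_2I)`. -/
noncomputable def Ahat {ι : Type} [Fintype ι] [DecidableEq ι]
    (A : Matrix ι ι ℂ) (ρ₁ ρ₂ : ℂ) : Matrix (ι ⊕ ι) (ι ⊕ ι) ℂ :=
  Matrix.fromBlocks A 1
    (-((A - ρ₁ • 1) * (A - ρ₂ • 1))) ((ρ₁ + ρ₂) • 1 - A)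

/-- The subspace `V̂ = {(u,v) ∈ ℂ^n × ℂ^n : v ∈ Im B} ⊆ ℂ^{2n}`,
where `B := (A−ρ_1I)(A−ρ_2I)`. -/
noncomputable def Vhat {ι : Type} [Fintype ι] [DecidableEq ι]
    (A : Matrix ι ι ℂ) (ρ₁ ρ₂ : ℂ) : Submodule ℂ (ι ⊕ ι → ℂ) :=
  Submodule.comap (LinearMap.funLeft ℂ ℂ (Sum.inr : ι → ι ⊕ ι))
    (LinearMap.range ((A - ρ₁ • 1) * (A - ρ₂ • 1)).mulVecLin)

/-- The idempotents `Ê_i ∈ M(2n,ℂ)` (`i = 1,…,p+1`) of the extended partition: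
for `i ≤ p` the projection onto block `i` of the first factor `ℂ^n`, and for
`i = p+1` the projection onto the second factor `ℂ^n`. -/
noncomputable def Ehat (p : ℕ) (nn : Fin p → ℕ) (i : Fin (p + 1)) :
    Matrix (((j : Fin p) × Fin (nn j)) ⊕ ((j : Fin p) × Fin (nn j)))
      (((j : Fin p) × Fin (nn j)) ⊕ ((j : Fin p) × Fin (nn j))) ℂ :=
  if h : (i : ℕ) < p then Matrix.fromBlocks (Eproj p nn ⟨i, h⟩) 0 0 0
  else Matrix.fromBlocks 0 0 0 1

/-- The extended partition `(n_1,…,n_p,n_{p+1})` with `n_{p+1} := rank B`, where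
`B := (A−ρ_1I)(A−ρ_2I)`. -/
noncomputable def nhat {ι : Type} [Fintype ι] [DecidableEq ι] (p : ℕ) (nn : Fin p → ℕ)
    (A : Matrix ι ι ℂ) (ρ₁ ρ₂ : ℂ) (i : Fin (p + 1)) : ℕ :=
  if h : (i : ℕ) < p then nn ⟨i, h⟩ else ((A - ρ₁ • 1) * (A - ρ₂ • 1)).rank

/-- Index type of the partition. -/
abbrev ISig (p : ℕ) (nn : Fin p → ℕ) : Type := (j : Fin p) × Fin (nn j)

namespace Stmt9Aux

open Module

variable {ι : Type} [Fintype ι] [DecidableEq ι]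

/-- extend a vector by zero on the right summand -/
noncomputable def elimL (ι : Type) : (ι → ℂ) →ₗ[ℂ] (ι ⊕ ι → ℂ) where
  toFun u := Sum.elim u 0
  map_add' u v := by funext x; cases x <;> simp
  map_smul' c u := by funext x; cases x <;> simp

noncomputable def elimR (ι : Type) : (ι → ℂ) →ₗ[ℂ] (ι ⊕ ι → ℂ) where
  toFun u := Sum.elim 0 u
  map_add' u v := by funext x; cases x <;> simp
  map_smul' c u := by funext x; cases x <;> simp

lemma elimL_inj : Function.Injective (elimL ι) :=
  fun u v h => funext fun i => congrFun h (Sum.inl i)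

lemma elimR_inj : Function.Injective (elimR ι) :=
  fun u v h => funext fun i => congrFun h (Sum.inr i)

lemma range_ul (X : Matrix ι ι ℂ) :
    LinearMap.range (fromBlocks X 0 0 0 : Matrix (ι ⊕ ι) (ι ⊕ ι) ℂ).mulVecLin
      = Submodule.map (elimL ι) (LinearMap.range X.mulVecLin) := by
  ext x
  simp only [LinearMap.mem_range, Submodule.mem_map, mulVecLin_apply]
  constructor
  · rintro ⟨z, rfl⟩
    exact ⟨X.mulVec (z ∘ Sum.inl), ⟨z ∘ Sum.inl, rfl⟩,
      by funext s; cases s <;> simp [fromBlocks_mulVec, elimL]⟩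
  · rintro ⟨y, ⟨u, rfl⟩, rfl⟩
    exact ⟨Sum.elim u 0, by funext s; cases s <;> simp [fromBlocks_mulVec, elimL]⟩

lemma range_ur (X : Matrix ι ι ℂ) :
    LinearMap.range (fromBlocks 0 X 0 0 : Matrix (ι ⊕ ι) (ι ⊕ ι) ℂ).mulVecLin
      = Submodule.map (elimL ι) (LinearMap.range X.mulVecLin) := by
  ext x
  simp only [LinearMap.mem_range, Submodule.mem_map, mulVecLin_apply]
  constructor
  · rintro ⟨z, rfl⟩
    exact ⟨X.mulVec (z ∘ Sum.inr), ⟨z ∘ Sum.inr, rfl⟩,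
      by funext s; cases s <;> simp [fromBlocks_mulVec, elimL]⟩
  · rintro ⟨y, ⟨u, rfl⟩, rfl⟩
    exact ⟨Sum.elim 0 u, by funext s; cases s <;> simp [fromBlocks_mulVec, elimL]⟩

lemma range_ll (X : Matrix ι ι ℂ) :
    LinearMap.range (fromBlocks 0 0 X 0 : Matrix (ι ⊕ ι) (ι ⊕ ι) ℂ).mulVecLin
      = Submodule.map (elimR ι) (LinearMap.range X.mulVecLin) := by
  ext x
  simp only [LinearMap.mem_range, Submodule.mem_map, mulVecLin_apply]
  constructor
  · rintro ⟨z, rfl⟩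
    exact ⟨X.mulVec (z ∘ Sum.inl), ⟨z ∘ Sum.inl, rfl⟩,
      by funext s; cases s <;> simp [fromBlocks_mulVec, elimR]⟩
  · rintro ⟨y, ⟨u, rfl⟩, rfl⟩
    exact ⟨Sum.elim u 0, by funext s; cases s <;> simp [fromBlocks_mulVec, elimR]⟩

lemma range_lr (X : Matrix ι ι ℂ) :
    LinearMap.range (fromBlocks 0 0 0 X : Matrix (ι ⊕ ι) (ι ⊕ ι) ℂ).mulVecLin
      = Submodule.map (elimR ι) (LinearMap.range X.mulVecLin) := by
  ext x
  simp only [LinearMap.mem_range, Submodule.mem_map, mulVecLin_apply]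
  constructor
  · rintro ⟨z, rfl⟩
    exact ⟨X.mulVec (z ∘ Sum.inr), ⟨z ∘ Sum.inr, rfl⟩,
      by funext s; cases s <;> simp [fromBlocks_mulVec, elimR]⟩
  · rintro ⟨y, ⟨u, rfl⟩, rfl⟩
    exact ⟨Sum.elim 0 u, by funext s; cases s <;> simp [fromBlocks_mulVec, elimR]⟩

lemma finrank_map_inj {f : (ι → ℂ) →ₗ[ℂ] (ι ⊕ ι → ℂ)} (hf : Function.Injective f)
    (q : Submodule ℂ (ι → ℂ)) : finrank ℂ (q.map f) = finrank ℂ q :=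
  (Submodule.equivMapOfInjective f hf q).finrank_eq.symm

lemma rank_ul (X : Matrix ι ι ℂ) :
    (fromBlocks X 0 0 0 : Matrix (ι ⊕ ι) (ι ⊕ ι) ℂ).rank = X.rank := by
  rw [Matrix.rank, range_ul, finrank_map_inj elimL_inj, Matrix.rank]

lemma rank_ur (X : Matrix ι ι ℂ) :
    (fromBlocks 0 X 0 0 : Matrix (ι ⊕ ι) (ι ⊕ ι) ℂ).rank = X.rank := by
  rw [Matrix.rank, range_ur, finrank_map_inj elimL_inj, Matrix.rank]

lemma rank_ll (X : Matrix ι ι ℂ) :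
    (fromBlocks 0 0 X 0 : Matrix (ι ⊕ ι) (ι ⊕ ι) ℂ).rank = X.rank := by
  rw [Matrix.rank, range_ll, finrank_map_inj elimR_inj, Matrix.rank]

lemma rank_lr (X : Matrix ι ι ℂ) :
    (fromBlocks 0 0 0 X : Matrix (ι ⊕ ι) (ι ⊕ ι) ℂ).rank = X.rank := by
  rw [Matrix.rank, range_lr, finrank_map_inj elimR_inj, Matrix.rank]

lemma range_diag (X Y : Matrix ι ι ℂ) :
    LinearMap.range (fromBlocks X 0 0 Y).mulVecLin
      = Submodule.map (elimL ι) (LinearMap.range X.mulVecLin)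
        ⊔ Submodule.map (elimR ι) (LinearMap.range Y.mulVecLin) := by
  apply le_antisymm
  · rintro x ⟨z, rfl⟩
    have : (fromBlocks X 0 0 Y).mulVecLin z
        = elimL ι (X.mulVec (z ∘ Sum.inl)) + elimR ι (Y.mulVec (z ∘ Sum.inr)) := by
      funext s; cases s <;> simp [fromBlocks_mulVec, elimL, elimR]
    rw [this]
    exact Submodule.add_mem_sup (Submodule.mem_map_of_mem ⟨_, rfl⟩)
      (Submodule.mem_map_of_mem ⟨_, rfl⟩)
  · rw [sup_le_iff]
    constructor
    · rintro x ⟨y, ⟨u, rfl⟩, rfl⟩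
      exact ⟨Sum.elim u 0, by funext s; cases s <;> simp [fromBlocks_mulVec, elimL]⟩
    · rintro x ⟨y, ⟨u, rfl⟩, rfl⟩
      exact ⟨Sum.elim 0 u, by funext s; cases s <;> simp [fromBlocks_mulVec, elimR]⟩

lemma rank_diag (X Y : Matrix ι ι ℂ) :
    (fromBlocks X 0 0 Y).rank = X.rank + Y.rank := by
  rw [Matrix.rank, range_diag]
  have hdisj : Submodule.map (elimL ι) (LinearMap.range X.mulVecLin)
      ⊓ Submodule.map (elimR ι) (LinearMap.range Y.mulVecLin) = ⊥ := by
    rw [Submodule.eq_bot_iff]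
    rintro x ⟨⟨u, -, hu⟩, ⟨v, -, hv⟩⟩
    funext s
    cases s with
    | inl a => rw [← hv]; simp [elimR]
    | inr a => rw [← hu]; simp [elimL]
  have h := Submodule.finrank_sup_add_finrank_inf_eq
    (Submodule.map (elimL ι) (LinearMap.range X.mulVecLin))
    (Submodule.map (elimR ι) (LinearMap.range Y.mulVecLin))
  rw [hdisj, finrank_bot, add_zero] at h
  rw [h, finrank_map_inj elimL_inj, finrank_map_inj elimR_inj, Matrix.rank, Matrix.rank]

lemma Eproj_eq_diagonal (p : ℕ) (nn : Fin p → ℕ) (i : Fin p) :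
    Eproj p nn i = Matrix.diagonal (fun x => if x.1 = i then (1:ℂ) else 0) := by
  funext x y
  by_cases h : x = y
  · subst h; by_cases h2 : x.1 = i <;> simp [Eproj, Matrix.diagonal_apply, h2]
  · simp [Eproj, Matrix.diagonal_apply, h]

lemma rank_Eproj (p : ℕ) (nn : Fin p → ℕ) (i : Fin p) :
    (Eproj p nn i).rank = nn i := by
  classical
  rw [Eproj_eq_diagonal, Matrix.rank_diagonal, ← Fintype.card_fin (nn i)]
  apply Fintype.card_congr
  refine Equiv.trans (Equiv.subtypeEquivRight (q := fun x => x.1 = i) fun x => ?_) ?_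
  · by_cases h : x.1 = i <;> simp [h]
  · exact { toFun := fun x => x.2 ▸ x.1.2
            invFun := fun k => ⟨⟨i, k⟩, rfl⟩
            left_inv := by rintro ⟨⟨j, k⟩, rfl⟩; rfl
            right_inv := fun k => rfl }

end Stmt9Aux

open Stmt9Aux Module

/-- If `A` satisfies the Okubo conditions and `ρ_1ρ_2 ≠ 0`, then
(i) `V̂` is invariant under `Â` and each `Ê_i`; (ii) `Â` is injective on `V̂`, so
`dim(Â V̂) = dim V̂ = n + rank B`; (iii) for all `τ ∈ ℂ` and `i`,
`dim((Â+τ)Ê_i V̂) = n_i = dim(Ê_i(Â+τ) V̂)`: i.e. `Â|_{V̂}` satisfies the Okubo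
conditions for the extended partition `(n_1,…,n_p, rank B)`. -/
theorem stmt_9 (p : ℕ) (nn : Fin p → ℕ) (hpos : ∀ i, 0 < nn i)
    (A : Matrix ((j : Fin p) × Fin (nn j)) ((j : Fin p) × Fin (nn j)) ℂ)
    (hrank : A.rank = ∑ i, nn i)
    (hOstar : ∀ (i : Fin p) (τ : ℂ),
      ((A + τ • 1) * Eproj p nn i).rank = nn i ∧
      (Eproj p nn i * (A + τ • 1)).rank = nn i)
    (ρ₁ ρ₂ : ℂ) (hρ : ρ₁ * ρ₂ ≠ 0) :
    (Submodule.map (Ahat A ρ₁ ρ₂).mulVecLin (Vhat A ρ₁ ρ₂) ≤ Vhat A ρ₁ ρ₂ ∧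
      ∀ i : Fin (p + 1),
        Submodule.map (Ehat p nn i).mulVecLin (Vhat A ρ₁ ρ₂) ≤ Vhat A ρ₁ ρ₂) ∧
    ((∀ x ∈ Vhat A ρ₁ ρ₂, (Ahat A ρ₁ ρ₂).mulVecLin x = 0 → x = 0) ∧
      Module.finrank ℂ (Submodule.map (Ahat A ρ₁ ρ₂).mulVecLin (Vhat A ρ₁ ρ₂)) =
        Module.finrank ℂ (Vhat A ρ₁ ρ₂) ∧
      Module.finrank ℂ (Vhat A ρ₁ ρ₂) =
        (∑ i, nn i) + ((A - ρ₁ • 1) * (A - ρ₂ • 1)).rank) ∧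
    (∀ (τ : ℂ) (i : Fin (p + 1)),
      Module.finrank ℂ
          (Submodule.map ((Ahat A ρ₁ ρ₂ + τ • 1) * Ehat p nn i).mulVecLin
            (Vhat A ρ₁ ρ₂)) = nhat p nn A ρ₁ ρ₂ i ∧
      Module.finrank ℂ
          (Submodule.map (Ehat p nn i * (Ahat A ρ₁ ρ₂ + τ • 1)).mulVecLin
            (Vhat A ρ₁ ρ₂)) = nhat p nn A ρ₁ ρ₂ i) := by
  classical
  set B : Matrix ((j : Fin p) × Fin (nn j)) ((j : Fin p) × Fin (nn j)) ℂ :=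
    (A - ρ₁ • 1) * (A - ρ₂ • 1) with hB
  set C : Matrix ((j : Fin p) × Fin (nn j)) ((j : Fin p) × Fin (nn j)) ℂ :=
    (ρ₁ + ρ₂) • 1 - A with hC
  set N : Matrix (((j : Fin p) × Fin (nn j)) ⊕ ((j : Fin p) × Fin (nn j)))
      (((j : Fin p) × Fin (nn j)) ⊕ ((j : Fin p) × Fin (nn j))) ℂ :=
    fromBlocks 1 0 0 B with hN
  set P : Matrix (((j : Fin p) × Fin (nn j)) ⊕ ((j : Fin p) × Fin (nn j)))
      (((j : Fin p) × Fin (nn j)) ⊕ ((j : Fin p) × Fin (nn j))) ℂ :=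
    fromBlocks 1 0 0 0 with hP
  set Pneg : Matrix (((j : Fin p) × Fin (nn j)) ⊕ ((j : Fin p) × Fin (nn j)))
      (((j : Fin p) × Fin (nn j)) ⊕ ((j : Fin p) × Fin (nn j))) ℂ :=
    fromBlocks (-1) 0 0 0 with hPneg
  have hAhat : Ahat A ρ₁ ρ₂ = fromBlocks A 1 (-B) C := rfl
  have keyBC : B * C = C * B := by
    rw [hB, hC]
    simp only [mul_sub, sub_mul, Matrix.mul_smul, Matrix.smul_mul, mul_one, one_mul,
      smul_smul, mul_assoc]
    module
  have keyBA : B + C * A = (ρ₁ * ρ₂) • 1 := by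
    rw [hB, hC]
    simp only [mul_sub, sub_mul, add_mul, Matrix.mul_smul, Matrix.smul_mul, mul_one, one_mul,
      smul_smul, mul_assoc]
    module
  -- V̂ is the range of N
  have hV : Vhat A ρ₁ ρ₂ = LinearMap.range N.mulVecLin := by
    ext x
    constructor
    · intro hx
      obtain ⟨y, hy⟩ := Submodule.mem_comap.mp hx
      refine ⟨Sum.elim (x ∘ Sum.inl) y, ?_⟩
      rw [mulVecLin_apply, hN, fromBlocks_mulVec]
      funext s
      cases s with
      | inl a => simp
      | inr a =>
        simp only [Sum.elim_comp_inl, Sum.elim_comp_inr, Matrix.zero_mulVec, zero_add,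
          Sum.elim_inr]
        exact congrFun hy a
    · rintro ⟨z, rfl⟩
      refine Submodule.mem_comap.mpr ⟨z ∘ Sum.inr, ?_⟩
      funext a
      simp [hN, fromBlocks_mulVec, LinearMap.funLeft_apply, mulVecLin_apply, hB]
      rw [← Matrix.mulVec_mulVec, Matrix.sub_mulVec, Matrix.sub_mulVec]
      simp [Matrix.smul_mulVec, Matrix.one_mulVec]
  have hmap : ∀ M : Matrix (((j : Fin p) × Fin (nn j)) ⊕ ((j : Fin p) × Fin (nn j)))
      (((j : Fin p) × Fin (nn j)) ⊕ ((j : Fin p) × Fin (nn j))) ℂ,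
      Submodule.map M.mulVecLin (Vhat A ρ₁ ρ₂) = LinearMap.range (M * N).mulVecLin := by
    intro M
    rw [hV, Matrix.mulVecLin_mul, LinearMap.range_comp]
  have hfr : ∀ M : Matrix (((j : Fin p) × Fin (nn j)) ⊕ ((j : Fin p) × Fin (nn j)))
      (((j : Fin p) × Fin (nn j)) ⊕ ((j : Fin p) × Fin (nn j))) ℂ,
      finrank ℂ (Submodule.map M.mulVecLin (Vhat A ρ₁ ρ₂)) = (M * N).rank := by
    intro M
    rw [hmap]
    rfl
  have hinv : ∀ M D : Matrix (((j : Fin p) × Fin (nn j)) ⊕ ((j : Fin p) × Fin (nn j)))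
      (((j : Fin p) × Fin (nn j)) ⊕ ((j : Fin p) × Fin (nn j))) ℂ,
      M * N = N * D → Submodule.map M.mulVecLin (Vhat A ρ₁ ρ₂) ≤ Vhat A ρ₁ ρ₂ := by
    intro M D hMD
    rw [hmap, hV, hMD, Matrix.mulVecLin_mul]
    exact LinearMap.range_comp_le_range _ _
  -- injectivity of Ahat
  have hzero : ∀ x : ((((j : Fin p) × Fin (nn j)) ⊕ ((j : Fin p) × Fin (nn j))) → ℂ),
      (Ahat A ρ₁ ρ₂).mulVecLin x = 0 → x = 0 := by
    intro x hx
    rw [mulVecLin_apply, hAhat, fromBlocks_mulVec] at hx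
    have e1 : A.mulVec (x ∘ Sum.inl) + (x ∘ Sum.inr) = 0 := by
      funext a
      simpa [Matrix.one_mulVec] using congrFun hx (Sum.inl a)
    have e2 : (-B).mulVec (x ∘ Sum.inl) + C.mulVec (x ∘ Sum.inr) = 0 := by
      funext a
      simpa using congrFun hx (Sum.inr a)
    have hv : (x ∘ Sum.inr) = -(A.mulVec (x ∘ Sum.inl)) :=
      eq_neg_of_add_eq_zero_right e1
    have h5 : (B + C * A).mulVec (x ∘ Sum.inl) = 0 := by
      have h6 : (B + C * A).mulVec (x ∘ Sum.inl)
          = -((-B).mulVec (x ∘ Sum.inl) + C.mulVec (x ∘ Sum.inr)) := by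
        rw [hv, Matrix.neg_mulVec, Matrix.mulVec_neg, Matrix.mulVec_mulVec, Matrix.add_mulVec]
        abel
      rw [h6, e2, neg_zero]
    rw [keyBA, Matrix.smul_mulVec, Matrix.one_mulVec] at h5
    have hu : (x ∘ Sum.inl) = 0 := by
      rcases smul_eq_zero.mp h5 with h | h
      · exact absurd h hρ
      · exact h
    rw [hu, Matrix.mulVec_zero, neg_zero] at hv
    funext s
    cases s with
    | inl a => exact congrFun hu a
    | inr a => exact congrFun hv a
  refine ⟨⟨?_, ?_⟩, ⟨fun x _ hx => hzero x hx, ?_, ?_⟩, ?_⟩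
  · -- invariance under Ahat
    refine hinv _ (fromBlocks A B (-1) C) ?_
    rw [hAhat, hN, fromBlocks_multiply, fromBlocks_multiply]
    simp [keyBC]
  · -- invariance under Ehat
    intro i
    by_cases h : (i : ℕ) < p
    · have hEhat : Ehat p nn i = fromBlocks (Eproj p nn ⟨i, h⟩) 0 0 0 := by
        unfold Ehat; rw [dif_pos h]
      rw [hEhat]
      refine hinv _ (fromBlocks (Eproj p nn ⟨i, h⟩) 0 0 0) ?_
      rw [hN, fromBlocks_multiply, fromBlocks_multiply]
      simp
    · have hEhat : Ehat p nn i = fromBlocks 0 0 0 1 := by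
        unfold Ehat; rw [dif_neg h]
      rw [hEhat]
      refine hinv _ (fromBlocks 0 0 0 1) ?_
      rw [hN, fromBlocks_multiply, fromBlocks_multiply]
      simp
  · -- Ahat injective on V̂ preserves dimension
    have hinj : Function.Injective (Ahat A ρ₁ ρ₂).mulVecLin :=
      LinearMap.ker_eq_bot.mp (LinearMap.ker_eq_bot'.mpr fun m hm => hzero m hm)
    exact (Submodule.equivMapOfInjective _ hinj _).finrank_eq.symm
  · -- dimension of V̂
    rw [hV]
    have : finrank ℂ (LinearMap.range N.mulVecLin) = N.rank := rfl
    rw [this, hN, rank_diag, Matrix.rank_one]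
    congr 1
    simp
  · -- the Okubo conditions for the extension
    intro τ i
    have hAτ : Ahat A ρ₁ ρ₂ + τ • 1 = fromBlocks (A + τ • 1) 1 (-B) (C + τ • 1) := by
      rw [hAhat, show (1 : Matrix (((j : Fin p) × Fin (nn j)) ⊕ ((j : Fin p) × Fin (nn j)))
          (((j : Fin p) × Fin (nn j)) ⊕ ((j : Fin p) × Fin (nn j))) ℂ)
          = fromBlocks 1 0 0 1 from fromBlocks_one.symm,
        fromBlocks_smul, fromBlocks_add]
      congr 1 <;> simp
    by_cases h : (i : ℕ) < p
    · have hEhat : Ehat p nn i = fromBlocks (Eproj p nn ⟨i, h⟩) 0 0 0 := by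
        unfold Ehat; rw [dif_pos h]
      have hnhat : nhat p nn A ρ₁ ρ₂ i = nn ⟨i, h⟩ := by
        unfold nhat; rw [dif_pos h]
      set E := Eproj p nn ⟨i, h⟩ with hE
      have m1 : fromBlocks E 0 0 (0 : Matrix ((j : Fin p) × Fin (nn j))
          ((j : Fin p) × Fin (nn j)) ℂ) * N = fromBlocks E 0 0 0 := by
        rw [hN, fromBlocks_multiply]
        simp
      constructor
      · rw [hfr, hEhat, hnhat, mul_assoc, m1]
        refine le_antisymm ?_ ?_
        · calc ((Ahat A ρ₁ ρ₂ + τ • 1) * fromBlocks E 0 0 0).rank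
              ≤ (fromBlocks E 0 0 0 : Matrix (ISig p nn ⊕ ISig p nn) (ISig p nn ⊕ ISig p nn) ℂ).rank := Matrix.rank_mul_le_right _ _
            _ = E.rank := rank_ul E
            _ = nn ⟨i, h⟩ := rank_Eproj p nn ⟨i, h⟩
        · have h2 : P *
              ((Ahat A ρ₁ ρ₂ + τ • 1) * fromBlocks E 0 0 0)
              = fromBlocks ((A + τ • 1) * E) 0 0 0 := by
            rw [hP, ← mul_assoc, hAτ, fromBlocks_multiply, fromBlocks_multiply]
            simp
          have h1 := Matrix.rank_mul_le_right
            P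
            ((Ahat A ρ₁ ρ₂ + τ • 1) * fromBlocks E 0 0 0)
          rw [h2, rank_ul, (hOstar ⟨i, h⟩ τ).1] at h1
          exact h1
      · rw [hfr, hEhat, hnhat]
        have m3 : (fromBlocks E 0 0 0 * (Ahat A ρ₁ ρ₂ + τ • 1)) * N
            = fromBlocks (E * (A + τ • 1)) (E * B) 0 0 := by
          rw [hAτ, hN, fromBlocks_multiply, fromBlocks_multiply]
          simp
        rw [m3]
        refine le_antisymm ?_ ?_
        · have hfac : fromBlocks (E * (A + τ • 1)) (E * B) 0 0
              = fromBlocks E 0 0 (0 : Matrix ((j : Fin p) × Fin (nn j))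
                  ((j : Fin p) × Fin (nn j)) ℂ) * fromBlocks (A + τ • 1) B 0 0 := by
            rw [fromBlocks_multiply]
            simp
          calc (fromBlocks (E * (A + τ • 1)) (E * B) 0 0 : Matrix (ISig p nn ⊕ ISig p nn) (ISig p nn ⊕ ISig p nn) ℂ).rank
              ≤ (fromBlocks E 0 0 0 : Matrix (ISig p nn ⊕ ISig p nn) (ISig p nn ⊕ ISig p nn) ℂ).rank := by
                rw [hfac]; exact Matrix.rank_mul_le_left _ _
            _ = E.rank := rank_ul E
            _ = nn ⟨i, h⟩ := rank_Eproj p nn ⟨i, h⟩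
        · have h2 : (fromBlocks (E * (A + τ • 1)) (E * B) 0 0 : Matrix (ISig p nn ⊕ ISig p nn) (ISig p nn ⊕ ISig p nn) ℂ) *
              P = fromBlocks (E * (A + τ • 1)) 0 0 0 := by
            rw [hP, fromBlocks_multiply]
            simp
          have h1 := Matrix.rank_mul_le_left
            (fromBlocks (E * (A + τ • 1)) (E * B) 0 0 : Matrix (ISig p nn ⊕ ISig p nn) (ISig p nn ⊕ ISig p nn) ℂ)
            P
          rw [h2, rank_ul, (hOstar ⟨i, h⟩ τ).2] at h1
          exact h1
    · have hEhat : Ehat p nn i = fromBlocks 0 0 0 1 := by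
        unfold Ehat; rw [dif_neg h]
      have hnhat : nhat p nn A ρ₁ ρ₂ i = B.rank := by
        unfold nhat; rw [dif_neg h]
      have m1 : (fromBlocks 0 0 0 1 : Matrix (ISig p nn ⊕ ISig p nn) (ISig p nn ⊕ ISig p nn) ℂ) * N = fromBlocks 0 0 0 B := by
        rw [hN, fromBlocks_multiply]
        simp
      constructor
      · rw [hfr, hEhat, hnhat, mul_assoc, m1]
        refine le_antisymm ?_ ?_
        · calc ((Ahat A ρ₁ ρ₂ + τ • 1) * fromBlocks 0 0 0 B).rank
              ≤ (fromBlocks 0 0 0 B : Matrix (ISig p nn ⊕ ISig p nn) (ISig p nn ⊕ ISig p nn) ℂ).rank := Matrix.rank_mul_le_right _ _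
            _ = B.rank := rank_lr B
        · have h2 : P *
              ((Ahat A ρ₁ ρ₂ + τ • 1) * fromBlocks 0 0 0 B)
              = fromBlocks 0 B 0 0 := by
            rw [hP, ← mul_assoc, hAτ, fromBlocks_multiply, fromBlocks_multiply]
            simp
          have h1 := Matrix.rank_mul_le_right
            P
            ((Ahat A ρ₁ ρ₂ + τ • 1) * fromBlocks 0 0 0 B)
          rw [h2, rank_ur] at h1
          exact h1
      · rw [hfr, hEhat, hnhat]
        have m2 : (fromBlocks 0 0 0 1 * (Ahat A ρ₁ ρ₂ + τ • 1)) * N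
            = fromBlocks 0 0 (-B) ((C + τ • 1) * B) := by
          rw [hAτ, hN, fromBlocks_multiply, fromBlocks_multiply]
          simp
        rw [m2]
        refine le_antisymm ?_ ?_
        · have hcomm : B * (C + τ • 1) = (C + τ • 1) * B := by
            rw [mul_add, add_mul, keyBC, Matrix.mul_smul, Matrix.smul_mul, mul_one, one_mul]
          have hfac : fromBlocks 0 0 (-B) ((C + τ • 1) * B)
              = (fromBlocks 0 0 0 B : Matrix (ISig p nn ⊕ ISig p nn) (ISig p nn ⊕ ISig p nn) ℂ) * fromBlocks 0 0 (-1) (C + τ • 1) := by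
            rw [fromBlocks_multiply]
            simp [hcomm]
          calc (fromBlocks 0 0 (-B) ((C + τ • 1) * B) : Matrix (ISig p nn ⊕ ISig p nn) (ISig p nn ⊕ ISig p nn) ℂ).rank
              ≤ (fromBlocks 0 0 0 B : Matrix (ISig p nn ⊕ ISig p nn) (ISig p nn ⊕ ISig p nn) ℂ).rank := by
                rw [hfac]; exact Matrix.rank_mul_le_left _ _
            _ = B.rank := rank_lr B
        · have h2 : (fromBlocks 0 0 (-B) ((C + τ • 1) * B) : Matrix (ISig p nn ⊕ ISig p nn) (ISig p nn ⊕ ISig p nn) ℂ) *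
              Pneg = fromBlocks 0 0 B 0 := by
            rw [hPneg, fromBlocks_multiply]
            simp
          have h1 := Matrix.rank_mul_le_left
            (fromBlocks 0 0 (-B) ((C + τ • 1) * B) : Matrix (ISig p nn ⊕ ISig p nn) (ISig p nn ⊕ ISig p nn) ℂ) Pneg
          rw [h2, rank_ll] at h1
          exact h1
end

section
/- Let A ∈ M(n,ℂ) satisfy the Okubo conditions, let ρ_1, ρ_2 ∈ ℂ with ρ_1ρ_2 ≠ 0, set A_j := E_j A (j = 1,…,p) and Â_j := Ê_j Â (j = 1,…,p+1), noting Â_j V̂ ⊆ V̂. Then the tuple (Â_1|_{V̂},…,Â_{p+1}|_{V̂}) is irreducible on V̂ (i.e. the only subspaces W ⊆ V̂ with Â_j W ⊆ W for all j = 1,…,p+1 are {0} and V̂) if and only if the tuple (A_1,…,A_p) is irreducible on ℂ^n (i.e. the only subspaces U ⊆ ℂ^n with A_j U ⊆ U for all j = 1,…,p are {0} and ℂ^n). -/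
open Matrix

section Aux

lemma Eproj_mulVec {p : ℕ} {nn : Fin p → ℕ} (i : Fin p) (x : ((j : Fin p) × Fin (nn j)) → ℂ) :
    Eproj p nn i *ᵥ x = fun y => if y.1 = i then x y else 0 := by
  funext y
  simp only [Eproj, mulVec, dotProduct]
  by_cases h : y.1 = i <;> simp [h]

lemma sum_Eproj_mulVec {p : ℕ} {nn : Fin p → ℕ} (x : ((j : Fin p) × Fin (nn j)) → ℂ) :
    ∑ i, Eproj p nn i *ᵥ x = x := by
  funext y
  rw [Finset.sum_apply]
  simp only [Eproj_mulVec]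
  simp

def inlL (ι : Type) : (ι → ℂ) →ₗ[ℂ] (ι ⊕ ι → ℂ) where
  toFun u := Sum.elim u 0
  map_add' u v := by funext x; cases x <;> simp
  map_smul' c u := by funext x; cases x <;> simp

lemma hatAct_lt {p : ℕ} {nn : Fin p → ℕ}
    (A : Matrix ((j : Fin p) × Fin (nn j)) ((j : Fin p) × Fin (nn j)) ℂ)
    (ρ₁ ρ₂ : ℂ) (i : Fin (p+1)) (h : (i : ℕ) < p)
    (f : ((j : Fin p) × Fin (nn j)) ⊕ ((j : Fin p) × Fin (nn j)) → ℂ) :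
    (Ehat p nn i * Ahat A ρ₁ ρ₂) *ᵥ f =
      Sum.elim (Eproj p nn ⟨i, h⟩ *ᵥ (A *ᵥ (f ∘ Sum.inl) + f ∘ Sum.inr)) 0 := by
  rw [← mulVec_mulVec, Ehat, dif_pos h, Ahat, fromBlocks_mulVec, fromBlocks_mulVec]
  simp [mulVec_add, Matrix.one_mulVec]

lemma hatAct_last {p : ℕ} {nn : Fin p → ℕ}
    (A : Matrix ((j : Fin p) × Fin (nn j)) ((j : Fin p) × Fin (nn j)) ℂ)
    (ρ₁ ρ₂ : ℂ) (i : Fin (p+1)) (h : ¬ (i : ℕ) < p)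
    (f : ((j : Fin p) × Fin (nn j)) ⊕ ((j : Fin p) × Fin (nn j)) → ℂ) :
    (Ehat p nn i * Ahat A ρ₁ ρ₂) *ᵥ f =
      Sum.elim (0 : ((j : Fin p) × Fin (nn j)) → ℂ)
        (-(((A - ρ₁ • 1) * (A - ρ₂ • 1)) *ᵥ (f ∘ Sum.inl))
        + ((ρ₁ + ρ₂) • (f ∘ Sum.inr) - A *ᵥ (f ∘ Sum.inr))) := by
  rw [← mulVec_mulVec, Ehat, dif_neg h, Ahat, fromBlocks_mulVec, fromBlocks_mulVec]
  simp [mulVec_add, Matrix.one_mulVec, Matrix.sub_mulVec, Matrix.neg_mulVec,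
    Matrix.smul_mulVec]

lemma Bexp {ι : Type} [Fintype ι] [DecidableEq ι] (A : Matrix ι ι ℂ) (ρ₁ ρ₂ : ℂ) :
    (A - ρ₁ • 1) * (A - ρ₂ • 1) = A * A - (ρ₁ + ρ₂) • A + (ρ₁ * ρ₂) • 1 := by
  simp only [sub_mul, mul_sub, smul_mul_assoc, mul_smul_comm, smul_smul, one_mul,
    mul_one, add_smul]
  module

lemma Bcomm {ι : Type} [Fintype ι] [DecidableEq ι] (A : Matrix ι ι ℂ) (ρ₁ ρ₂ : ℂ) :
    A * ((A - ρ₁ • 1) * (A - ρ₂ • 1)) = ((A - ρ₁ • 1) * (A - ρ₂ • 1)) * A := by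
  simp only [Bexp, add_mul, mul_add, sub_mul, mul_sub, smul_mul_assoc, mul_smul_comm,
    one_mul, mul_one, mul_assoc]

end Aux

/-- Let `A` satisfy the Okubo conditions, `ρ_1ρ_2 ≠ 0`, `A_j := E_j A`
and `Â_j := Ê_j Â` (each of which preserves `V̂`). The tuple `(Â_1|_{V̂},…,Â_{p+1}|_{V̂})`
is irreducible on `V̂` iff `(A_1,…,A_p)` is irreducible on `ℂ^n`. -/
theorem stmt_10 (p : ℕ) (nn : Fin p → ℕ) (hpos : ∀ i, 0 < nn i)
    (A : Matrix ((j : Fin p) × Fin (nn j)) ((j : Fin p) × Fin (nn j)) ℂ)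
    (hrank : A.rank = ∑ i, nn i)
    (hOstar : ∀ (i : Fin p) (τ : ℂ),
      ((A + τ • 1) * Eproj p nn i).rank = nn i ∧
      (Eproj p nn i * (A + τ • 1)).rank = nn i)
    (ρ₁ ρ₂ : ℂ) (hρ : ρ₁ * ρ₂ ≠ 0)
    (hinv : ∀ i : Fin (p + 1),
      Submodule.map (Ehat p nn i * Ahat A ρ₁ ρ₂).mulVecLin (Vhat A ρ₁ ρ₂) ≤
        Vhat A ρ₁ ρ₂) :
    (∀ W : Submodule ℂ (((j : Fin p) × Fin (nn j)) ⊕ ((j : Fin p) × Fin (nn j)) → ℂ),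
      W ≤ Vhat A ρ₁ ρ₂ →
      (∀ i : Fin (p + 1),
        Submodule.map (Ehat p nn i * Ahat A ρ₁ ρ₂).mulVecLin W ≤ W) →
      W = ⊥ ∨ W = Vhat A ρ₁ ρ₂)
    ↔ (∀ U : Submodule ℂ (((j : Fin p) × Fin (nn j)) → ℂ),
      (∀ i : Fin p, Submodule.map (Eproj p nn i * A).mulVecLin U ≤ U) →
      U = ⊥ ∨ U = ⊤) := by
  classical
  constructor
  · -- hat-irreducibility implies irreducibility
    intro hirr U hU
    by_contra hcon
    push_neg at hcon
    obtain ⟨hUbot, hUtop⟩ := hcon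
    -- A is invertible
    have hsurj : Function.Surjective A.mulVecLin := by
      rw [← LinearMap.range_eq_top]
      apply Submodule.eq_top_of_finrank_eq
      rw [Module.finrank_fintype_fun_eq_card]
      rw [show A.rank = Module.finrank ℂ ↥(LinearMap.range A.mulVecLin) from rfl] at hrank
      rw [hrank]
      simp [Fintype.card_sigma]
    have hinj : Function.Injective A.mulVecLin :=
      LinearMap.injective_iff_surjective.2 hsurj
    have hEA : ∀ (i : Fin p) (u : ((j : Fin p) × Fin (nn j)) → ℂ), u ∈ U →
        (Eproj p nn i * A) *ᵥ u ∈ U := by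
      intro i u hu
      exact hU i ⟨u, hu, rfl⟩
    have hAU : ∀ u ∈ U, A *ᵥ u ∈ U := by
      intro u hu
      have hs : ∑ i, (Eproj p nn i * A) *ᵥ u = A *ᵥ u := by
        simp only [← mulVec_mulVec]
        exact sum_Eproj_mulVec _
      rw [← hs]
      exact Submodule.sum_mem _ fun i _ => hEA i u hu
    have hmapAU : Submodule.map A.mulVecLin U = U := by
      have hle : Submodule.map A.mulVecLin U ≤ U := by
        rintro _ ⟨u, hu, rfl⟩
        exact hAU u hu
      exact Submodule.eq_of_le_of_finrank_le hle
        (Submodule.equivMapOfInjective _ hinj U).finrank_eq.le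
    have hEU : ∀ (i : Fin p) (x : ((j : Fin p) × Fin (nn j)) → ℂ), x ∈ U →
        Eproj p nn i *ᵥ x ∈ U := by
      intro i x hx
      rw [← hmapAU] at hx
      obtain ⟨y, hy, rfl⟩ := hx
      rw [mulVecLin_apply, mulVec_mulVec]
      exact hEA i y hy
    have hBU : ∀ u ∈ U, ((A - ρ₁ • 1) * (A - ρ₂ • 1)) *ᵥ u ∈ U := by
      intro u hu
      rw [Bexp, add_mulVec, sub_mulVec, smul_mulVec, smul_mulVec,
        one_mulVec, ← mulVec_mulVec]
      exact Submodule.add_mem _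
        (Submodule.sub_mem _ (hAU _ (hAU u hu)) (Submodule.smul_mem _ _ (hAU u hu)))
        (Submodule.smul_mem _ _ hu)
    -- the candidate invariant subspace
    set Wh : Submodule ℂ ((((j : Fin p) × Fin (nn j)) ⊕ ((j : Fin p) × Fin (nn j))) → ℂ) :=
      Submodule.comap (LinearMap.funLeft ℂ ℂ (Sum.inl : _ → _ ⊕ _)) U ⊓
      Submodule.comap (LinearMap.funLeft ℂ ℂ (Sum.inr : _ → _ ⊕ _))
        (U ⊓ LinearMap.range ((A - ρ₁ • 1) * (A - ρ₂ • 1)).mulVecLin) with hWhdef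
    have hmemWh : ∀ f, f ∈ Wh ↔ (f ∘ Sum.inl ∈ U ∧ (f ∘ Sum.inr ∈ U ∧
        f ∘ Sum.inr ∈ LinearMap.range ((A - ρ₁ • 1) * (A - ρ₂ • 1)).mulVecLin)) := by
      intro f
      rfl
    have hWle : Wh ≤ Vhat A ρ₁ ρ₂ := by
      intro f hf
      exact ((hmemWh f).1 hf).2.2
    have hWinv : ∀ i : Fin (p + 1),
        Submodule.map (Ehat p nn i * Ahat A ρ₁ ρ₂).mulVecLin Wh ≤ Wh := by
      intro i
      rintro _ ⟨f, hf, rfl⟩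
      obtain ⟨hf1, hf2, hf3⟩ := (hmemWh f).1 hf
      by_cases h : (i : ℕ) < p
      · rw [mulVecLin_apply, hatAct_lt A ρ₁ ρ₂ i h f]
        rw [hmemWh]
        refine ⟨?_, ?_, ?_⟩
        · show Eproj p nn ⟨i, h⟩ *ᵥ (A *ᵥ (f ∘ Sum.inl) + f ∘ Sum.inr) ∈ U
          exact hEU _ _ (Submodule.add_mem _ (hAU _ hf1) hf2)
        · exact Submodule.zero_mem _
        · exact Submodule.zero_mem _
      · rw [mulVecLin_apply, hatAct_last A ρ₁ ρ₂ i h f]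
        rw [hmemWh]
        refine ⟨Submodule.zero_mem _, ?_, ?_⟩
        · show -(((A - ρ₁ • 1) * (A - ρ₂ • 1)) *ᵥ (f ∘ Sum.inl))
            + ((ρ₁ + ρ₂) • (f ∘ Sum.inr) - A *ᵥ (f ∘ Sum.inr)) ∈ U
          exact Submodule.add_mem _ (Submodule.neg_mem _ (hBU _ hf1))
            (Submodule.sub_mem _ (Submodule.smul_mem _ _ hf2) (hAU _ hf2))
        · show -(((A - ρ₁ • 1) * (A - ρ₂ • 1)) *ᵥ (f ∘ Sum.inl))
            + ((ρ₁ + ρ₂) • (f ∘ Sum.inr) - A *ᵥ (f ∘ Sum.inr)) ∈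
            LinearMap.range ((A - ρ₁ • 1) * (A - ρ₂ • 1)).mulVecLin
          obtain ⟨w, hw⟩ := hf3
          refine Submodule.add_mem _ ⟨-(f ∘ Sum.inl), ?_⟩ ⟨(ρ₁ + ρ₂) • w - A *ᵥ w, ?_⟩
          · rw [mulVecLin_apply, mulVec_neg]
          · rw [mulVecLin_apply] at hw ⊢
            rw [mulVec_sub, mulVec_smul, hw, mulVec_mulVec, ← Bcomm, ← mulVec_mulVec, hw]
      done
    rcases hirr Wh hWle hWinv with hbot | htop
    · -- Wh = ⊥ contradicts U ≠ ⊥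
      obtain ⟨u, hu, hune⟩ := Submodule.exists_mem_ne_zero_of_ne_bot hUbot
      have hmem : Sum.elim u 0 ∈ Wh := by
        rw [hmemWh]
        refine ⟨?_, ?_, ?_⟩
        · show u ∈ U; exact hu
        · exact Submodule.zero_mem _
        · exact Submodule.zero_mem _
      rw [hbot, Submodule.mem_bot] at hmem
      exact hune (by funext x; exact congrFun hmem (Sum.inl x))
    · -- Wh = Vhat contradicts U ≠ ⊤
      apply hUtop
      rw [Submodule.eq_top_iff']
      intro u
      have hmem : Sum.elim u 0 ∈ Vhat A ρ₁ ρ₂ := by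
        show Sum.elim u (0 : ((j : Fin p) × Fin (nn j)) → ℂ) ∘ Sum.inr ∈
          LinearMap.range ((A - ρ₁ • 1) * (A - ρ₂ • 1)).mulVecLin
        rw [Sum.elim_comp_inr]
        exact Submodule.zero_mem _
      rw [← htop, hmemWh] at hmem
      exact hmem.1
  · -- irreducibility implies hat-irreducibility
    intro hirr W hWV hWinv
    set U1 : Submodule ℂ (((j : Fin p) × Fin (nn j)) → ℂ) :=
      Submodule.comap (inlL _) W with hU1def
    have hU1inv : ∀ i : Fin p,
        Submodule.map (Eproj p nn i * A).mulVecLin U1 ≤ U1 := by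
      intro i
      rintro _ ⟨u, hu, rfl⟩
      have h : ((i.castSucc : Fin (p+1)) : ℕ) < p := by simp [i.isLt]
      have hm := hWinv i.castSucc ⟨Sum.elim u 0, hu, rfl⟩
      have he : (Ehat p nn i.castSucc * Ahat A ρ₁ ρ₂).mulVecLin (Sum.elim u 0)
          = Sum.elim ((Eproj p nn i * A) *ᵥ u) 0 := by
        rw [mulVecLin_apply, hatAct_lt A ρ₁ ρ₂ i.castSucc h]
        have hidx : (⟨((i.castSucc : Fin (p+1)) : ℕ), h⟩ : Fin p) = i := by
          ext; simp
        rw [hidx, Sum.elim_comp_inl, Sum.elim_comp_inr, add_zero, mulVec_mulVec]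
      rw [he] at hm
      show Sum.elim ((Eproj p nn i * A).mulVecLin u) 0 ∈ W
      exact hm
    rcases hirr U1 hU1inv with h1 | h1
    · -- U1 = ⊥ forces W = ⊥
      left
      rw [Submodule.eq_bot_iff]
      intro f hf
      have key : ∀ g ∈ W, g ∘ Sum.inr = -(A *ᵥ (g ∘ Sum.inl)) := by
        intro g hg
        have hz : ∀ y, (A *ᵥ (g ∘ Sum.inl) + g ∘ Sum.inr) y = 0 := by
          intro y
          have h : (((y.1.castSucc : Fin (p+1))) : ℕ) < p := by simp [y.1.isLt]
          have hm := hWinv y.1.castSucc ⟨g, hg, rfl⟩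
          rw [mulVecLin_apply, hatAct_lt A ρ₁ ρ₂ y.1.castSucc h] at hm
          have hidx : (⟨((y.1.castSucc : Fin (p+1)) : ℕ), h⟩ : Fin p) = y.1 := by
            ext; simp
          rw [hidx] at hm
          have hb : Eproj p nn y.1 *ᵥ (A *ᵥ (g ∘ Sum.inl) + g ∘ Sum.inr) ∈ U1 := hm
          rw [h1, Submodule.mem_bot] at hb
          have hby := congrFun hb y
          rw [Eproj_mulVec] at hby
          simpa using hby
        funext y
        have h0 := hz y
        simp only [Pi.add_apply] at h0
        simp only [Pi.neg_apply]
        linear_combination h0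
      have hlast := hWinv (Fin.last p) ⟨f, hf, rfl⟩
      rw [mulVecLin_apply, hatAct_last A ρ₁ ρ₂ (Fin.last p) (by simp) f] at hlast
      have hcomp : -(((A - ρ₁ • 1) * (A - ρ₂ • 1)) *ᵥ (f ∘ Sum.inl))
          + ((ρ₁ + ρ₂) • (f ∘ Sum.inr) - A *ᵥ (f ∘ Sum.inr))
          = -((ρ₁ * ρ₂) • (f ∘ Sum.inl)) := by
        rw [key f hf, Bexp, add_mulVec, sub_mulVec, smul_mulVec, smul_mulVec,
          one_mulVec, ← mulVec_mulVec, mulVec_neg]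
        module
      rw [hcomp] at hlast
      have h0 := key _ hlast
      rw [Sum.elim_comp_inr, Sum.elim_comp_inl, mulVec_zero, neg_zero] at h0
      have hu0 : f ∘ Sum.inl = 0 := by
        have hne := neg_eq_zero.1 h0
        exact (smul_eq_zero.1 hne).resolve_left hρ
      funext x
      cases x with
      | inl x => exact congrFun hu0 x
      | inr x =>
        have hv := key f hf
        rw [hu0, mulVec_zero, neg_zero] at hv
        exact congrFun hv x
    · -- U1 = ⊤ forces W = Vhat
      right
      apply le_antisymm hWV
      intro f hfV
      have hWu : ∀ u : ((j : Fin p) × Fin (nn j)) → ℂ,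
          Sum.elim u (0 : ((j : Fin p) × Fin (nn j)) → ℂ) ∈ W := by
        intro u
        have : u ∈ U1 := by rw [h1]; trivial
        exact this
      have hWB : ∀ w, Sum.elim (0 : ((j : Fin p) × Fin (nn j)) → ℂ)
          (((A - ρ₁ • 1) * (A - ρ₂ • 1)) *ᵥ w) ∈ W := by
        intro w
        have hm := hWinv (Fin.last p) ⟨Sum.elim (-w) 0, hWu (-w), rfl⟩
        rw [mulVecLin_apply, hatAct_last A ρ₁ ρ₂ (Fin.last p) (by simp) _] at hm
        rw [Sum.elim_comp_inl, Sum.elim_comp_inr, mulVec_neg, neg_neg,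
          smul_zero, mulVec_zero, sub_zero, add_zero] at hm
        exact hm
      obtain ⟨w, hw⟩ := hfV
      have hsplit : f = Sum.elim (f ∘ Sum.inl) (0 : ((j : Fin p) × Fin (nn j)) → ℂ)
          + Sum.elim (0 : ((j : Fin p) × Fin (nn j)) → ℂ) (f ∘ Sum.inr) := by
        funext x; cases x <;> simp
      rw [hsplit]
      refine Submodule.add_mem _ (hWu _) ?_
      have : f ∘ Sum.inr = ((A - ρ₁ • 1) * (A - ρ₂ • 1)) *ᵥ w := by
        rw [mulVecLin_apply] at hw
        exact hw.symm
      rw [this]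
      exact hWB w
end

section
/- For every k ∈ {1,…,N}, the kernel of the product (L(m;λ) − λ_1 I_n)(L(m;λ) − λ_2 I_n)⋯(L(m;λ) − λ_k I_n) has dimension m_1 + m_2 + ⋯ + m_k. -/
open Matrix

/-- The matrix `L(m;λ) ∈ M(n,ℂ)` for the partition `n = m_1 + ⋯ + m_N` (indexed by the
type `Σ i : Fin N, Fin (m i)`): the `(i,i)` block is `λ_i I_{m_i}`, the `(i,i+1)` block is
`I_{m_i,m_{i+1}} = (δ_{μν})`, and all other blocks vanish. -/
noncomputable def Lmat (N : ℕ) (m : ℕ → ℕ) (lam : ℕ → ℂ) :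
    Matrix ((i : Fin N) × Fin (m i)) ((i : Fin N) × Fin (m i)) ℂ :=
  fun x y =>
    if (x.2 : ℕ) = (y.2 : ℕ) then
      (if x.1 = y.1 then lam x.1
        else if (x.1 : ℕ) + 1 = (y.1 : ℕ) then 1 else 0)
    else 0

/-- The ordered product `(L − λ_1 I)(L − λ_2 I)⋯(L − λ_k I)`
(with `λ_1, …, λ_k` being `lam 0, …, lam (k-1)`). -/
noncomputable def prodFactors {ι : Type} [Fintype ι] [DecidableEq ι]
    (L : Matrix ι ι ℂ) (lam : ℕ → ℂ) : ℕ → Matrix ι ι ℂ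
  | 0 => 1
  | k + 1 => prodFactors L lam k * (L - lam k • 1)


section
variable {N : ℕ} {m : ℕ → ℕ} (lam : ℕ → ℂ)

lemma sig_ext {x y : (i : Fin N) × Fin (m i)} (h1 : (x.1 : ℕ) = (y.1 : ℕ))
    (h2 : (x.2 : ℕ) = (y.2 : ℕ)) : x = y := by
  obtain ⟨⟨i, hi⟩, ⟨a, ha⟩⟩ := x
  obtain ⟨⟨j, hj⟩, ⟨b, hb⟩⟩ := y
  simp only at h1 h2
  subst h1; subst h2; rfl

lemma Emat_apply (j : ℕ) (c y : (i : Fin N) × Fin (m i)) :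
    (Lmat N m lam - lam j • 1) c y =
      if (c.2 : ℕ) = (y.2 : ℕ) then
        (if c.1 = y.1 then lam c.1 - lam j
          else if (c.1 : ℕ) + 1 = (y.1 : ℕ) then 1 else 0)
      else 0 := by
  simp only [Matrix.sub_apply, Matrix.smul_apply, Matrix.one_apply, Lmat, smul_eq_mul]
  by_cases h2 : (c.2 : ℕ) = (y.2 : ℕ)
  · by_cases h1 : c.1 = y.1
    · have hcy : c = y := sig_ext (by rw [h1]) h2
      simp [h1, h2, hcy]
    · have hcy : c ≠ y := fun h => h1 (by rw [h])
      simp [h1, h2, hcy]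
  · have hcy : c ≠ y := fun h => h2 (by rw [h])
    simp [h2, hcy]


lemma P_zero1 (k : ℕ) (x : (i : Fin N) × Fin (m i)) :
    ∀ y, (y.2 : ℕ) ≠ (x.2 : ℕ) → prodFactors (Lmat N m lam) lam k x y = 0 := by
  induction k with
  | zero =>
    intro y h
    have hxy : x ≠ y := fun h' => h (by rw [h'])
    simp [prodFactors, Matrix.one_apply, hxy]
  | succ k ih =>
    intro y h
    rw [prodFactors, Matrix.mul_apply]
    refine Finset.sum_eq_zero fun c _ => ?_
    rw [Emat_apply]
    by_cases h2 : (c.2 : ℕ) = (y.2 : ℕ)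
    · rw [ih c (by rw [h2]; exact h), zero_mul]
    · rw [if_neg h2, mul_zero]

lemma P_zero2 (k : ℕ) (x : (i : Fin N) × Fin (m i)) :
    ∀ y, (x.1 : ℕ) + k < (y.1 : ℕ) → prodFactors (Lmat N m lam) lam k x y = 0 := by
  induction k with
  | zero =>
    intro y h
    have hxy : x ≠ y := fun h' => by rw [h'] at h; omega
    simp [prodFactors, Matrix.one_apply, hxy]
  | succ k ih =>
    intro y h
    rw [prodFactors, Matrix.mul_apply]
    refine Finset.sum_eq_zero fun c _ => ?_
    rw [Emat_apply]
    by_cases h2 : (c.2 : ℕ) = (y.2 : ℕ)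
    · rw [if_pos h2]
      by_cases h1 : c.1 = y.1
      · rw [ih c (by rw [h1]; omega), zero_mul]
      · rw [if_neg h1]
        by_cases h3 : (c.1 : ℕ) + 1 = (y.1 : ℕ)
        · rw [ih c (by omega), zero_mul]
        · rw [if_neg h3, mul_zero]
    · rw [if_neg h2, mul_zero]

lemma P_col0 (k : ℕ) :
    ∀ x y : (i : Fin N) × Fin (m i), (y.1 : ℕ) < k →
      prodFactors (Lmat N m lam) lam k x y = 0 := by
  induction k with
  | zero => intro x y h; omega
  | succ k ih =>
    intro x y h
    rw [prodFactors, Matrix.mul_apply]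
    refine Finset.sum_eq_zero fun c _ => ?_
    rw [Emat_apply]
    by_cases h2 : (c.2 : ℕ) = (y.2 : ℕ)
    · rw [if_pos h2]
      by_cases h1 : c.1 = y.1
      · rw [if_pos h1]
        by_cases hk : (y.1 : ℕ) < k
        · rw [ih x c (by rw [h1]; exact hk), zero_mul]
        · have : (c.1 : ℕ) = k := by rw [h1]; omega
          rw [this, sub_self, mul_zero]
      · rw [if_neg h1]
        by_cases h3 : (c.1 : ℕ) + 1 = (y.1 : ℕ)
        · rw [ih x c (by omega), zero_mul]
        · rw [if_neg h3, mul_zero]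
    · rw [if_neg h2, mul_zero]

lemma P_one (hmono : ∀ i j, i ≤ j → j < N → m j ≤ m i) (k : ℕ) :
    ∀ x y : (i : Fin N) × Fin (m i), (y.1 : ℕ) = (x.1 : ℕ) + k →
      (y.2 : ℕ) = (x.2 : ℕ) → prodFactors (Lmat N m lam) lam k x y = 1 := by
  induction k with
  | zero =>
    intro x y h1 h2
    have : x = y := sig_ext (by omega) h2.symm
    simp [prodFactors, Matrix.one_apply, this]
  | succ k ih =>
    intro x y h1 h2
    have hyN : (y.1 : ℕ) < N := y.1.isLt
    have hc1 : (x.1 : ℕ) + k < N := by omega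
    have hc2 : (x.2 : ℕ) < m ((x.1 : ℕ) + k) := by
      have hlt : (y.2 : ℕ) < m (y.1 : ℕ) := y.2.isLt
      have := hmono ((x.1 : ℕ) + k) (y.1 : ℕ) (by omega) hyN
      omega
    set c₀ : (i : Fin N) × Fin (m i) := ⟨⟨(x.1 : ℕ) + k, hc1⟩, ⟨(x.2 : ℕ), hc2⟩⟩ with hc₀
    rw [prodFactors, Matrix.mul_apply]
    rw [Finset.sum_eq_single c₀]
    · have hP : prodFactors (Lmat N m lam) lam k x c₀ = 1 := ih x c₀ rfl rfl
      rw [hP, Emat_apply]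
      have e2 : ((c₀.2 : ℕ) = (y.2 : ℕ)) := by simp [hc₀, h2]; rfl
      have e1 : c₀.1 ≠ y.1 := by
        intro h
        have := congrArg Fin.val h
        simp [hc₀] at this
        omega
      have e3 : (c₀.1 : ℕ) + 1 = (y.1 : ℕ) := by simp [hc₀]; omega
      rw [if_pos e2, if_neg e1, if_pos e3, one_mul]
    · intro c _ hne
      rw [Emat_apply]
      by_cases h2' : (c.2 : ℕ) = (y.2 : ℕ)
      · rw [if_pos h2']
        by_cases h1' : c.1 = y.1
        · have hcy : c = y := sig_ext (by rw [h1']) h2'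
          rw [P_zero2 lam k x c (by rw [hcy]; omega), zero_mul]
        · rw [if_neg h1']
          by_cases h3' : (c.1 : ℕ) + 1 = (y.1 : ℕ)
          · exact absurd (sig_ext (x := c) (y := c₀) (by simp [hc₀]; omega)
              (by show (c.2 : ℕ) = (x.2 : ℕ); omega)) hne
          · rw [if_neg h3', mul_zero]
      · rw [if_neg h2', mul_zero]
    · intro h
      exact absurd (Finset.mem_univ c₀) h

end

/-- For a non-increasing sequence `m_1 ≥ ⋯ ≥ m_N > 0` and every
`k ∈ {1,…,N}`, the kernel of `(L(m;λ) − λ_1 I)⋯(L(m;λ) − λ_k I)` has dimension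
`m_1 + ⋯ + m_k`. -/
theorem stmt_13 (N : ℕ) (m : ℕ → ℕ) (lam : ℕ → ℂ)
    (hpos : ∀ i < N, 0 < m i) (hmono : ∀ i j, i ≤ j → j < N → m j ≤ m i)
    (k : ℕ) (hk1 : 1 ≤ k) (hkN : k ≤ N) :
    Module.finrank ℂ
        (LinearMap.ker (prodFactors (Lmat N m lam) lam k).mulVecLin) =
      ∑ j ∈ Finset.range k, m j := by
  classical
  set ι := (i : Fin N) × Fin (m i) with hι
  set P := prodFactors (Lmat N m lam) lam k with hP
  set f : {x : ι // k ≤ (x.1 : ℕ)} → ι := Subtype.val with hf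
  -- Step 1: kernel equality
  have hker : LinearMap.ker P.mulVecLin = LinearMap.ker (LinearMap.funLeft ℂ ℂ f) := by
    ext v
    simp only [LinearMap.mem_ker, Matrix.mulVecLin_apply]
    constructor
    · intro hv
      have key : ∀ b : ℕ, ∀ x : ι, (x.1 : ℕ) = b → k ≤ b → v x = 0 := by
        intro b
        induction b using Nat.strong_induction_on with
        | _ b ih =>
          intro x hxb hkb
          have hbN : b < N := hxb ▸ x.1.isLt
          have hrm : (x.2 : ℕ) < m (b - k) := by
            have h1 : (x.2 : ℕ) < m b := hxb ▸ x.2.isLt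
            have := hmono (b - k) b (by omega) hbN
            omega
          set r : ι := ⟨⟨b - k, by omega⟩, ⟨(x.2 : ℕ), hrm⟩⟩ with hr
          have h0 : (P *ᵥ v) r = 0 := by rw [hv]; rfl
          rw [Matrix.mulVec, dotProduct] at h0
          rw [Finset.sum_eq_single x] at h0
          · have h1 : P r x = 1 := P_one lam hmono k r x (by simp [hr]; omega) rfl
            rw [h1, one_mul] at h0
            exact h0
          · intro y _ hyx
            by_cases hc1 : (y.1 : ℕ) < k
            · rw [hP, P_col0 lam k r y hc1, zero_mul]
            · by_cases hc2 : (y.2 : ℕ) = (r.2 : ℕ)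
              · by_cases hc3 : (r.1 : ℕ) + k < (y.1 : ℕ)
                · rw [hP, P_zero2 lam k r y hc3, zero_mul]
                · have hy1 : (y.1 : ℕ) ≤ b := by simp [hr] at hc3; omega
                  by_cases hc4 : (y.1 : ℕ) < b
                  · rw [ih (y.1 : ℕ) hc4 y rfl (by omega), mul_zero]
                  · exact absurd (sig_ext (x := y) (y := x) (by omega)
                      (by simpa [hr] using hc2)) hyx
              · rw [hP, P_zero1 lam k r y hc2, zero_mul]
          · intro h; exact absurd (Finset.mem_univ x) h
      have : (LinearMap.funLeft ℂ ℂ f) v = fun t => v (f t) := rfl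
      rw [this]
      funext t
      exact key (t.1.1 : ℕ) t.1 rfl t.2
    · intro hv
      have hv' : ∀ x : ι, k ≤ (x.1 : ℕ) → v x = 0 := by
        intro x hx
        exact congrFun hv ⟨x, hx⟩
      funext r
      rw [Matrix.mulVec, dotProduct]
      refine Finset.sum_eq_zero fun y _ => ?_
      by_cases hc1 : (y.1 : ℕ) < k
      · rw [hP, P_col0 lam k r y hc1, zero_mul]
      · rw [hv' y (by omega), mul_zero]
  -- Step 2: dimension of the kernel of funLeft
  have hsurj : Function.Surjective (LinearMap.funLeft ℂ ℂ f) :=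
    LinearMap.funLeft_surjective_of_injective ℂ ℂ f Subtype.val_injective
  have hrn := LinearMap.finrank_range_add_finrank_ker (LinearMap.funLeft ℂ ℂ f)
  have hrange : Module.finrank ℂ ↥(LinearMap.range (LinearMap.funLeft ℂ ℂ f)) =
      Fintype.card {x : ι // k ≤ (x.1 : ℕ)} := by
    rw [LinearMap.range_eq_top.mpr hsurj, finrank_top, Module.finrank_pi]
  have hdom : Module.finrank ℂ (ι → ℂ) = Fintype.card ι := Module.finrank_pi ℂ
  -- Step 3: counting
  have hcard1 : Fintype.card ι = ∑ j ∈ Finset.range N, m j := by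
    rw [Fintype.card_sigma]
    simp only [Fintype.card_fin]
    exact Fin.sum_univ_eq_sum_range (fun j => m j) N
  have hcard2 : Fintype.card {x : ι // k ≤ (x.1 : ℕ)} =
      ∑ j ∈ Finset.range N, (if k ≤ j then m j else 0) := by
    rw [Fintype.card_subtype, Finset.card_filter, ← Finset.univ_sigma_univ,
      Finset.sum_sigma]
    have : ∀ i : Fin N, (∑ _ν : Fin (m i), if k ≤ (i : ℕ) then 1 else 0) =
        (if k ≤ (i : ℕ) then m i else 0) := by
      intro i
      by_cases h : k ≤ (i : ℕ) <;> simp [h]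
    rw [Finset.sum_congr rfl (fun i _ => this i)]
    exact Fin.sum_univ_eq_sum_range (fun j => if k ≤ j then m j else 0) N
  have hsplit : ∑ j ∈ Finset.range N, m j =
      (∑ j ∈ Finset.range k, m j) + ∑ j ∈ Finset.range N, (if k ≤ j then m j else 0) := by
    have h1 : ∑ j ∈ Finset.range N, m j =
        ∑ j ∈ Finset.range N, ((if j < k then m j else 0) + (if k ≤ j then m j else 0)) := by
      refine Finset.sum_congr rfl fun j _ => ?_
      split_ifs <;> omega
    rw [h1, Finset.sum_add_distrib]
    congr 1
    have h2 : Finset.filter (fun j => j < k) (Finset.range N) = Finset.range k := by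
      ext j
      simp only [Finset.mem_filter, Finset.mem_range]
      omega
    rw [← Finset.sum_filter, h2]
  rw [hrange, hdom, hcard1, hcard2] at hrn
  rw [hker]
  rw [hsplit] at hrn
  linarith [hrn]
end

section
/- Let p ≥ 1, n ≥ 1, and for each j = 0,…,p let m_{j,1},…,m_{j,n_j} be non-negative integers with m_{j,1}+⋯+m_{j,n_j} = n, and let τ_j ∈ {1,…,n_j} satisfy m_{j,τ_j} ≥ m_{j,ν} for all ν = 1,…,n_j. If the index of rigidity equals 2, that is ∑_{j=0}^p ∑_{ν=1}^{n_j} m_{j,ν}² − (p−1)n² = 2, then d_max(𝐦) := ∑_{j=0}^p m_{j,τ_j} − (p−1)n > 0. -/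
/-- For a tuple `𝐦 = (m_{j,ν})` of `p+1` partitions of `n ≥ 1` with
`τ_j` choosing a maximal part of the `j`-th partition: if the index of rigidity is `2`,
i.e. `∑_{j,ν} m_{j,ν}² − (p−1)n² = 2`, then `d_max(𝐦) = ∑_j m_{j,τ_j} − (p−1)n > 0`. -/
theorem stmt_16 (p : ℕ) (hp : 1 ≤ p) (n : ℕ) (hn : 1 ≤ n) (nn : Fin (p + 1) → ℕ)
    (m : (j : Fin (p + 1)) → Fin (nn j) → ℕ)
    (hsum : ∀ j, ∑ ν, m j ν = n)
    (τ : (j : Fin (p + 1)) → Fin (nn j))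
    (hτ : ∀ j ν, m j ν ≤ m j (τ j))
    (hidx : (∑ j, ∑ ν, (m j ν : ℤ) ^ 2) - ((p : ℤ) - 1) * (n : ℤ) ^ 2 = 2) :
    0 < (∑ j, (m j (τ j) : ℤ)) - ((p : ℤ) - 1) * (n : ℤ) := by
  have key : ∀ j, ∑ ν, (m j ν : ℤ) ^ 2 ≤ (m j (τ j) : ℤ) * n := by
    intro j
    calc ∑ ν, (m j ν : ℤ) ^ 2 ≤ ∑ ν, (m j (τ j) : ℤ) * (m j ν : ℤ) := by
          apply Finset.sum_le_sum
          intro ν _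
          have h1 : (m j ν : ℤ) ≤ (m j (τ j) : ℤ) := by exact_mod_cast hτ j ν
          have h2 : (0:ℤ) ≤ (m j ν : ℤ) := Nat.cast_nonneg _
          nlinarith
      _ = (m j (τ j) : ℤ) * ∑ ν, (m j ν : ℤ) := by rw [Finset.mul_sum]
      _ = (m j (τ j) : ℤ) * n := by
          norm_cast
          rw [hsum j]
  have hkey : (∑ j, ∑ ν, (m j ν : ℤ) ^ 2) ≤ (∑ j, (m j (τ j) : ℤ)) * n := by
    rw [Finset.sum_mul]
    exact Finset.sum_le_sum fun j _ => key j
  have hmain : (2:ℤ) ≤ ((∑ j, (m j (τ j) : ℤ)) - ((p : ℤ) - 1) * n) * n := by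
    have : (n:ℤ)^2 = (n:ℤ) * n := sq (n:ℤ) ▸ rfl
    nlinarith
  have hn' : (1:ℤ) ≤ n := by exact_mod_cast hn
  nlinarith
end
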